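/- Let q be a prime power, G = GL(2,𝔽_{q²}), H = GL(2,𝔽_q) ≤ G, B the subgroup of upper-triangular matrices in G, B(q) = B ∩ H, and C = {diag(a, a^q) : a ∈ 𝔽_{q²}^×}. Let θ₁, θ₂: 𝔽_{q²}^× → ℂ^× be group homomorphisms, θ the linear character of B given by θ([[a,b],[0,d]]) = θ₁(a)θ₂(d), and I[θ](g) = (1/|B|)·∑_{u ∈ G, u⁻¹gu ∈ B} θ(u⁻¹gu) the induced character. Then for all x, y ∈ 𝔽_{q²}^× with x⁻¹y ∉ 𝔽_q: ∑_{h ∈ H} I[θ](diag(x,y)·h) = (θ₁(x)θ₂(y) + θ₁(y)θ₂(x))·(∑_{b ∈ B(q)} θ(b)) + (q−1)·θ₁(x)θ₂(y)·(∑_{c ∈ C} θ(c))·(∑_{t ∈ 𝔽_q^×} θ₂(t)). -/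

import Mathlib

open scoped Classical

/-- The subgroup `H = GL(2,𝔽_q)` of `G = GL(2,𝔽_{q²})`, embedded entrywise. -/
def Hsub (F K : Type*) [Field F] [Field K] [Algebra F K] :
    Subgroup ((Matrix (Fin 2) (Fin 2) K)ˣ) :=
  (Units.map ((algebraMap F K).mapMatrix.toMonoidHom :
    Matrix (Fin 2) (Fin 2) F →* Matrix (Fin 2) (Fin 2) K)).range

/-- The diagonal matrix `m_{x,y} = diag(x,y)` as an element of `GL(2,K)`. -/
noncomputable def diagGL {K : Type*} [Field K] (x y : Kˣ) : (Matrix (Fin 2) (Fin 2) K)ˣ :=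
  ((Matrix.isUnit_iff_isUnit_det !![(x : K), 0; 0, (y : K)]).mpr (by
    rw [Matrix.det_fin_two_of]
    simp [x.isUnit.mul y.isUnit])).unit

/-- Extension by zero of a character of `Kˣ` to `K`. -/
noncomputable def extK {K : Type*} [Field K] (χ : Kˣ →* ℂˣ) : K → ℂ :=
  fun a => if h : a = 0 then 0 else χ (Units.mk0 a h)

/-- The character of `GL(2,K)` induced from the linear character
`[[a,b],[0,d]] ↦ θ₁(a)θ₂(d)` of the Borel subgroup `B` of upper triangular matrices,
via the Frobenius formula. -/
noncomputable def indB {K : Type*} [Field K] [Fintype K] (θ₁ θ₂ : Kˣ →* ℂˣ)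
    (g : (Matrix (Fin 2) (Fin 2) K)ˣ) : ℂ :=
  (({u : (Matrix (Fin 2) (Fin 2) K)ˣ |
      (u : Matrix (Fin 2) (Fin 2) K) 1 0 = 0}.toFinset.card : ℂ))⁻¹ *
    ∑ u : (Matrix (Fin 2) (Fin 2) K)ˣ,
      if ((u⁻¹ * g * u : (Matrix (Fin 2) (Fin 2) K)ˣ) : Matrix (Fin 2) (Fin 2) K) 1 0 = 0 then
        extK θ₁ (((u⁻¹ * g * u : (Matrix (Fin 2) (Fin 2) K)ˣ) :
            Matrix (Fin 2) (Fin 2) K) 0 0) *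
        extK θ₂ (((u⁻¹ * g * u : (Matrix (Fin 2) (Fin 2) K)ˣ) :
            Matrix (Fin 2) (Fin 2) K) 1 1)
      else 0

section Dev
variable {K : Type*} [Field K]

local notation "M2" => Matrix (Fin 2) (Fin 2) K
local notation "GL2" => (Matrix (Fin 2) (Fin 2) K)ˣ

lemma extK_zero (χ : Kˣ →* ℂˣ) : extK χ 0 = 0 := by simp [extK]

lemma extK_unit (χ : Kˣ →* ℂˣ) (u : Kˣ) : extK χ (u : K) = χ u := by
  have : (u : K) ≠ 0 := u.ne_zero
  have hu : Units.mk0 (u : K) this = u := Units.ext rfl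
  simp only [extK, dif_neg this, hu]

lemma extK_mul (χ : Kˣ →* ℂˣ) (a b : K) : extK χ (a * b) = extK χ a * extK χ b := by
  rcases eq_or_ne a 0 with ha | ha
  · simp [ha, extK]
  rcases eq_or_ne b 0 with hb | hb
  · simp [hb, extK]
  have hab : a * b ≠ 0 := mul_ne_zero ha hb
  simp only [extK, dif_neg ha, dif_neg hb, dif_neg hab]
  rw [← Units.val_mul, ← map_mul]
  congr 2
  exact Units.ext rfl

/-- slp of `g` on the vector `v` (eigenvalue if `g v ∥ v`). -/
noncomputable def slp (g : M2) (v : Fin 2 → K) : K :=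
  if v 0 = 0 then g.mulVec v 1 / v 1 else g.mulVec v 0 / v 0

/-- Weight of a vector: `θ(diag part of g on line of v)` if `g` fixes the line of `v`. -/
noncomputable def Wt (θ₁ θ₂ : Kˣ →* ℂˣ) (g : GL2) (v : Fin 2 → K) : ℂ :=
  if (g : M2).mulVec v 1 * v 0 = (g : M2).mulVec v 0 * v 1 then
    extK θ₁ (slp (g : M2) v) * extK θ₂ ((g : M2).det / slp (g : M2) v)
  else 0

noncomputable def glOf (A : M2) : GL2 := if h : IsUnit A then h.unit else 1

lemma glOf_coe {A : M2} (h : A.det ≠ 0) : ((glOf A : GL2) : M2) = A := by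
  have hu : IsUnit A := (Matrix.isUnit_iff_isUnit_det A).mpr (isUnit_iff_ne_zero.mpr h)
  simp [glOf, dif_pos hu, IsUnit.unit_spec]

lemma det_coe_ne_zero (u : GL2) : ((u : M2)).det ≠ 0 := by
  have : IsUnit ((u : M2)).det := (Matrix.isUnit_iff_isUnit_det _).mp u.isUnit
  exact this.ne_zero

lemma col0_ne_zero (u : GL2) : (fun i => (u : M2) i 0) ≠ 0 := by
  intro h
  apply det_coe_ne_zero u
  have h0 : (u : M2) 0 0 = 0 := congrFun h 0
  have h1 : (u : M2) 1 0 = 0 := congrFun h 1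
  rw [Matrix.det_fin_two, h0, h1]; ring

/-- Key lemma A: the Frobenius-formula summand depends only on the first column of `u`. -/
lemma keyA (θ₁ θ₂ : Kˣ →* ℂˣ) (g u : GL2) :
    (if ((u⁻¹ * g * u : GL2) : M2) 1 0 = 0 then
        extK θ₁ (((u⁻¹ * g * u : GL2) : M2) 0 0) *
        extK θ₂ (((u⁻¹ * g * u : GL2) : M2) 1 1)
      else 0)
    = Wt θ₁ θ₂ g (fun i => (u : M2) i 0) := by
  classical
  set A : M2 := (u : M2) with hA
  set G : M2 := (g : M2) with hG
  have hd : A.det ≠ 0 := det_coe_ne_zero u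
  set P : M2 := G * A with hP
  have hcoe : ((u⁻¹ * g * u : GL2) : M2) = A⁻¹ * P := by
    push_cast [Matrix.coe_units_inv]
    rw [hP, hG, hA, Matrix.mul_assoc]
  set v : Fin 2 → K := fun i => A i 0 with hv
  have hmv : ∀ i, G.mulVec v i = P i 0 := by
    intro i
    simp [Matrix.mulVec, Matrix.mul_apply, dotProduct, Fin.sum_univ_two, hv, hP]
  -- entries of the conjugate
  have hAinv : A⁻¹ = A.det⁻¹ • !![A 1 1, -A 0 1; -A 1 0, A 0 0] := by
    rw [Matrix.inv_def, Matrix.adjugate_fin_two, Ring.inverse_eq_inv']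
  have e10 : (A⁻¹ * P) 1 0 = A.det⁻¹ * (A 0 0 * P 1 0 - A 1 0 * P 0 0) := by
    rw [hAinv]
    simp [Matrix.mul_apply, Fin.sum_univ_two]
    ring
  have e00 : (A⁻¹ * P) 0 0 = A.det⁻¹ * (A 1 1 * P 0 0 - A 0 1 * P 1 0) := by
    rw [hAinv]
    simp [Matrix.mul_apply, Fin.sum_univ_two]
    ring
  have hdet2 : A.det = A 0 0 * A 1 1 - A 0 1 * A 1 0 := Matrix.det_fin_two A
  by_cases hcond : G.mulVec v 1 * v 0 = G.mulVec v 0 * v 1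
  · -- parallel case
    have hcross : P 1 0 * A 0 0 = P 0 0 * A 1 0 := by
      have := hcond; rw [hmv 0, hmv 1] at this; simpa [hv] using this
    have h10 : ((u⁻¹ * g * u : GL2) : M2) 1 0 = 0 := by
      rw [hcoe, e10]
      rw [mul_comm (A 0 0) (P 1 0), mul_comm (A 1 0) (P 0 0)]
      rw [hcross]; ring
    rw [if_pos h10, Wt, if_pos hcond]
    -- identify slp
    set s : K := slp G v with hs
    have hserq : ∀ i, P i 0 = s * v i := by
      by_cases h0 : v 0 = 0
      · have hv1 : v 1 ≠ 0 := by
          intro h1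
          apply col0_ne_zero u
          funext i; fin_cases i
          · exact h0
          · exact h1
        have hs' : s = P 1 0 / v 1 := by rw [hs, slp, if_pos h0, hmv 1]
        have hP00 : P 0 0 = 0 := by
          have := hcross
          have hv0 : A 0 0 = 0 := h0
          rw [hv0, mul_zero] at this
          rcases mul_eq_zero.mp this.symm with h | h
          · exact h
          · exact absurd h hv1
        intro i
        fin_cases i
        · simp [hP00, h0]
        · rw [hs']; field_simp; rfl
      · have hs' : s = P 0 0 / v 0 := by rw [hs, slp, if_neg h0, hmv 0]
        intro i
        fin_cases i
        · rw [hs']; field_simp; rfl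
        · rw [hs']
          field_simp
          have := hcross
          simp only [hv] at this ⊢
          simp only [Fin.mk_one]
          linear_combination this
    have hd' : A 0 0 * A 1 1 - A 0 1 * A 1 0 ≠ 0 := hdet2 ▸ hd
    have hsv : ((u⁻¹ * g * u : GL2) : M2) 0 0 = s := by
      rw [hcoe, e00, hserq 0, hserq 1]
      simp only [hv]
      rw [hdet2]
      field_simp
    -- s ≠ 0
    have hsne : s ≠ 0 := by
      intro h0
      have hP0 : ∀ i, P i 0 = 0 := fun i => by rw [hserq i, h0, zero_mul]
      have : P.det = 0 := by
        rw [Matrix.det_fin_two, hP0 0, hP0 1]; ring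
      rw [hP, Matrix.det_mul] at this
      exact (mul_ne_zero (det_coe_ne_zero g) hd) this
    have hdetconj : ((u⁻¹ * g * u : GL2) : M2).det = G.det := by
      rw [hcoe, Matrix.det_mul, hP, Matrix.det_mul, Matrix.det_nonsing_inv]
      rw [Ring.inverse_eq_inv']
      field_simp
    have h11 : ((u⁻¹ * g * u : GL2) : M2) 1 1 = G.det / s := by
      have hexp : ((u⁻¹ * g * u : GL2) : M2).det
          = ((u⁻¹ * g * u : GL2) : M2) 0 0 * ((u⁻¹ * g * u : GL2) : M2) 1 1
            - ((u⁻¹ * g * u : GL2) : M2) 0 1 * ((u⁻¹ * g * u : GL2) : M2) 1 0 :=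
        Matrix.det_fin_two _
      rw [h10, hsv, hdetconj] at hexp
      rw [eq_div_iff hsne]
      linear_combination -hexp
    rw [hsv, h11]
  · -- non-parallel case
    have h10 : ((u⁻¹ * g * u : GL2) : M2) 1 0 ≠ 0 := by
      rw [hcoe, e10]
      intro h
      apply hcond
      have h2 : A 0 0 * P 1 0 - A 1 0 * P 0 0 = 0 := by
        rcases mul_eq_zero.mp h with h' | h'
        · exact absurd h' (inv_ne_zero hd)
        · exact h'
      rw [hmv 0, hmv 1]
      simp only [hv]
      linear_combination h2
    rw [if_neg h10, Wt, if_neg hcond]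
end Dev

section Dev2
variable {K : Type*} [Field K] [Fintype K]

local notation "M2" => Matrix (Fin 2) (Fin 2) K
local notation "GL2" => (Matrix (Fin 2) (Fin 2) K)ˣ

lemma ne_zero_vec_iff {v : Fin 2 → K} : v ≠ 0 ↔ (v 0 ≠ 0 ∨ v 1 ≠ 0) := by
  constructor
  · intro h
    by_contra hc
    push_neg at hc
    exact h (funext fun i => by fin_cases i <;> simp [hc.1, hc.2])
  · rintro (h | h) h0 <;> [exact h (congrFun h0 0); exact h (congrFun h0 1)]

lemma det_col2_ne {v w : Fin 2 → K} (hv : v ≠ 0) (hw : ∀ c : K, w ≠ c • v) :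
    v 0 * w 1 - w 0 * v 1 ≠ 0 := by
  intro h
  rcases ne_zero_vec_iff.mp hv with h0 | h1
  · apply hw (w 0 / v 0)
    funext i; fin_cases i
    · simp [Pi.smul_apply, smul_eq_mul]; field_simp
    · simp [Pi.smul_apply, smul_eq_mul]; field_simp; linear_combination h
  · by_cases h0 : v 0 = 0
    · have hw0 : w 0 = 0 := by
        rw [h0] at h; simp at h
        rcases h with h | h
        · exact h
        · exact absurd h h1
      apply hw (w 1 / v 1)
      funext i; fin_cases i
      · simp [Pi.smul_apply, smul_eq_mul, hw0, h0]
      · simp [Pi.smul_apply, smul_eq_mul]; field_simp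
    · apply hw (w 0 / v 0)
      funext i; fin_cases i
      · simp [Pi.smul_apply, smul_eq_mul]; field_simp
      · simp [Pi.smul_apply, smul_eq_mul]; field_simp; linear_combination h

lemma col1_not_smul_col0 (u : GL2) (c : K) :
    (fun i => (u : M2) i 1) ≠ c • (fun i => (u : M2) i 0) := by
  intro h
  apply det_coe_ne_zero u
  have h0 : (u : M2) 0 1 = c * (u : M2) 0 0 := by
    have := congrFun h 0; simpa [Pi.smul_apply, smul_eq_mul] using this
  have h1 : (u : M2) 1 1 = c * (u : M2) 1 0 := by
    have := congrFun h 1; simpa [Pi.smul_apply, smul_eq_mul] using this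
  rw [Matrix.det_fin_two, h0, h1]; ring

lemma image_col0 :
    (Finset.univ.image (fun u : GL2 => fun i => (u : M2) i 0))
      = Finset.univ.filter (fun v : Fin 2 → K => v ≠ 0) := by
  ext v
  simp only [Finset.mem_image, Finset.mem_filter, Finset.mem_univ, true_and]
  constructor
  · rintro ⟨u, -, rfl⟩
    exact col0_ne_zero u
  · intro hv
    by_cases h0 : v 0 = 0
    · have h1 : v 1 ≠ 0 := by
        rcases ne_zero_vec_iff.mp hv with h | h
        · exact absurd h0 h
        · exact h
      have hdet : (!![(0:K), 1; v 1, 0]).det ≠ 0 := by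
        rw [Matrix.det_fin_two_of]; simpa using h1
      refine ⟨glOf !![(0:K), 1; v 1, 0], ?_⟩
      funext i; fin_cases i <;> simp only [glOf_coe hdet] <;> simp [h0]
    · have hdet : (!![v 0, 0; v 1, 1]).det ≠ 0 := by
        rw [Matrix.det_fin_two_of]; simpa using h0
      refine ⟨glOf !![v 0, 0; v 1, 1], ?_⟩
      funext i; fin_cases i <;> simp [glOf_coe hdet]

lemma card_smul_set (v : Fin 2 → K) (hv : v ≠ 0) :
    (Finset.univ.filter (fun w : Fin 2 → K => ∃ c : K, w = c • v)).card = Fintype.card K := by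
  have : Finset.univ.filter (fun w : Fin 2 → K => ∃ c : K, w = c • v)
      = Finset.univ.image (fun c : K => c • v) := by
    ext w
    simp only [Finset.mem_filter, Finset.mem_image, Finset.mem_univ, true_and]
    exact exists_congr fun c => eq_comm
  rw [this, Finset.card_image_of_injective _ (smul_left_injective K hv), Finset.card_univ]

lemma card_fiber_col0 (v : Fin 2 → K) (hv : v ≠ 0) :
    (Finset.univ.filter (fun u : GL2 => (fun i => (u : M2) i 0) = v)).card
      = Fintype.card K ^ 2 - Fintype.card K := by
  have hbij : (Finset.univ.filter (fun u : GL2 => (fun i => (u : M2) i 0) = v)).card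
      = (Finset.univ.filter (fun w : Fin 2 → K => ¬ ∃ c : K, w = c • v)).card := by
    refine Finset.card_nbij' (fun u => fun i => (u : M2) i 1)
      (fun w => glOf !![v 0, w 0; v 1, w 1]) ?_ ?_ ?_ ?_
    · intro u hu
      simp only [Finset.coe_filter, Set.mem_setOf_eq, Finset.mem_filter, Finset.mem_univ, true_and] at hu ⊢
      rintro ⟨c, hc⟩
      exact col1_not_smul_col0 u c (hu ▸ hc)
    · intro w hw
      simp only [Finset.coe_filter, Set.mem_setOf_eq, Finset.mem_filter, Finset.mem_univ, true_and] at hw ⊢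
      have hdet : (!![v 0, w 0; v 1, w 1]).det ≠ 0 := by
        rw [Matrix.det_fin_two_of]
        exact det_col2_ne hv (fun c hc => hw ⟨c, hc⟩)
      funext i; fin_cases i <;> simp [glOf_coe hdet]
    · intro u hu
      simp only [Finset.coe_filter, Set.mem_setOf_eq, Finset.mem_filter, Finset.mem_univ, true_and] at hu
      have hdet : (!![v 0, (u : M2) 0 1; v 1, (u : M2) 1 1]).det ≠ 0 := by
        rw [Matrix.det_fin_two_of]
        refine det_col2_ne (w := fun i => (u : M2) i 1) hv ?_
        intro c hc
        exact col1_not_smul_col0 u c (by rw [hc, hu])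
      apply Units.ext
      rw [glOf_coe hdet]
      apply Matrix.ext
      intro i j
      fin_cases i <;> fin_cases j <;>
        simp [← hu]
    · intro w hw
      simp only [Finset.coe_filter, Set.mem_setOf_eq, Finset.mem_filter, Finset.mem_univ, true_and] at hw
      have hdet : (!![v 0, w 0; v 1, w 1]).det ≠ 0 := by
        rw [Matrix.det_fin_two_of]
        exact det_col2_ne hv (fun c hc => hw ⟨c, hc⟩)
      funext i; fin_cases i <;> simp [glOf_coe hdet]
  rw [hbij]
  have htot := Finset.card_filter_add_card_filter_not
    (s := (Finset.univ : Finset (Fin 2 → K))) (p := fun w => ∃ c : K, w = c • v)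
  have hcard : (Finset.univ : Finset (Fin 2 → K)).card = Fintype.card K ^ 2 := by
    rw [Finset.card_univ]
    simp [Fintype.card_fun]
  rw [card_smul_set v hv, hcard] at htot
  omega

end Dev2

section Dev3
variable {K : Type*} [Field K] [Fintype K]

local notation "M2" => Matrix (Fin 2) (Fin 2) K
local notation "GL2" => (Matrix (Fin 2) (Fin 2) K)ˣ

/-- Cardinality of the Borel subgroup. -/
lemma card_borel :
    ({u : GL2 | (u : M2) 1 0 = 0}.toFinset.card)
      = (Fintype.card K - 1) * ((Fintype.card K - 1) * Fintype.card K) := by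
  have hset : {u : GL2 | (u : M2) 1 0 = 0}.toFinset
      = Finset.univ.filter (fun u : GL2 => (u : M2) 1 0 = 0) := by
    ext u; simp
  have himg : Finset.univ.filter (fun u : GL2 => (u : M2) 1 0 = 0)
      = Finset.univ.image (fun z : Kˣ × Kˣ × K => glOf !![(z.1 : K), z.2.2; 0, (z.2.1 : K)]) := by
    ext u
    simp only [Finset.mem_filter, Finset.mem_image, Finset.mem_univ, true_and]
    constructor
    · intro h10
      have hdet : (u : M2).det = (u : M2) 0 0 * (u : M2) 1 1 := by
        rw [Matrix.det_fin_two, h10]; ring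
      have h00 : (u : M2) 0 0 ≠ 0 := by
        intro h; apply det_coe_ne_zero u; rw [hdet, h, zero_mul]
      have h11 : (u : M2) 1 1 ≠ 0 := by
        intro h; apply det_coe_ne_zero u; rw [hdet, h, mul_zero]
      refine ⟨⟨Units.mk0 _ h00, Units.mk0 _ h11, (u : M2) 0 1⟩, ?_⟩
      have hdet' : (!![(u : M2) 0 0, (u : M2) 0 1; 0, (u : M2) 1 1]).det ≠ 0 := by
        rw [Matrix.det_fin_two_of]; simpa using mul_ne_zero h00 h11
      apply Units.ext
      simp only [Units.val_mk0]
      rw [glOf_coe hdet']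
      apply Matrix.ext; intro i j
      fin_cases i <;> fin_cases j <;> simp [h10]
    · rintro ⟨⟨a, d, b⟩, rfl⟩
      have hdet : (!![(a : K), b; 0, (d : K)]).det ≠ 0 := by
        rw [Matrix.det_fin_two_of]; simpa using mul_ne_zero a.ne_zero d.ne_zero
      simp [glOf_coe hdet]
  rw [hset, himg, Finset.card_image_of_injective]
  · simp [Fintype.card_prod, Fintype.card_units]
  · intro z z' h
    have hdet : ∀ (w : Kˣ × Kˣ × K), (!![(w.1 : K), w.2.2; 0, (w.2.1 : K)]).det ≠ 0 := by
      intro w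
      rw [Matrix.det_fin_two_of]; simpa using mul_ne_zero w.1.ne_zero w.2.1.ne_zero
    have h' := congrArg (fun u : GL2 => (u : M2)) h
    simp only [glOf_coe (hdet z), glOf_coe (hdet z')] at h'
    have e00 := congrFun (congrFun h' 0) 0
    have e11 := congrFun (congrFun h' 1) 1
    have e01 := congrFun (congrFun h' 0) 1
    simp at e00 e11 e01
    rcases z with ⟨a, d, b⟩; rcases z' with ⟨a', d', b'⟩
    simp only at e00 e11 e01
    ext
    · exact e00
    · exact e11
    · exact e01

/-- Wt is invariant under scaling the vector. -/
lemma Wt_smul (θ₁ θ₂ : Kˣ →* ℂˣ) (g : GL2) {c : K} (hc : c ≠ 0) (v : Fin 2 → K) :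
    Wt θ₁ θ₂ g (c • v) = Wt θ₁ θ₂ g v := by
  have hmv : ∀ i, (g : M2).mulVec (c • v) i = c * (g : M2).mulVec v i := by
    intro i; rw [Matrix.mulVec_smul]; simp
  have hcond : ((g : M2).mulVec (c • v) 1 * (c • v) 0 = (g : M2).mulVec (c • v) 0 * (c • v) 1)
      ↔ ((g : M2).mulVec v 1 * v 0 = (g : M2).mulVec v 0 * v 1) := by
    rw [hmv 0, hmv 1]
    simp only [Pi.smul_apply, smul_eq_mul]
    constructor
    · intro h
      apply mul_left_cancel₀ (mul_ne_zero hc hc)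
      linear_combination h
    · intro h
      linear_combination c * c * h
  have hslp : slp (g : M2) (c • v) = slp (g : M2) v := by
    unfold slp
    rw [hmv 0, hmv 1]
    simp only [Pi.smul_apply, smul_eq_mul, mul_eq_zero]
    by_cases h0 : v 0 = 0
    · simp [h0, hc, mul_div_mul_left _ _ hc]
    · have : ¬ (c = 0 ∨ v 0 = 0) := by tauto
      simp only [if_neg this, if_neg h0]
      rw [mul_div_mul_left _ _ hc]
  unfold Wt
  rw [hslp]
  by_cases h : (g : M2).mulVec v 1 * v 0 = (g : M2).mulVec v 0 * v 1
  · rw [if_pos (hcond.mpr h), if_pos h]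
  · rw [if_neg (fun hh => h (hcond.mp hh)), if_neg h]

/-- representative vector of a line -/
def rep : Option K → (Fin 2 → K) := fun ℓ => ℓ.elim ![0, 1] (fun c => ![1, c])

lemma rep_none : rep (K := K) none = ![0, 1] := rfl
lemma rep_some (c : K) : rep (some c) = ![1, c] := rfl

noncomputable def lineOf (v : Fin 2 → K) : Option K :=
  if v 0 = 0 then none else some (v 1 / v 0)

lemma Wt_eq_rep (θ₁ θ₂ : Kˣ →* ℂˣ) (g : GL2) (v : Fin 2 → K) (hv : v ≠ 0) :
    Wt θ₁ θ₂ g v = Wt θ₁ θ₂ g (rep (lineOf v)) := by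
  unfold lineOf
  by_cases h0 : v 0 = 0
  · have h1 : v 1 ≠ 0 := by
      rcases ne_zero_vec_iff.mp hv with h | h
      · exact absurd h0 h
      · exact h
    rw [if_pos h0, rep_none]
    have : v = v 1 • ![0, 1] := by
      funext i; fin_cases i <;> simp [h0]
    conv_lhs => rw [this]
    rw [Wt_smul θ₁ θ₂ g h1]
  · rw [if_neg h0, rep_some]
    have : v = v 0 • ![1, v 1 / v 0] := by
      funext i; fin_cases i
      · simp
      · simp; field_simp
    conv_lhs => rw [this]
    rw [Wt_smul θ₁ θ₂ g h0]

lemma card_fiber_line (ℓ : Option K) :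
    ((Finset.univ.filter (fun v : Fin 2 → K => v ≠ 0)).filter
        (fun v => lineOf v = ℓ)).card = Fintype.card K - 1 := by
  rcases ℓ with _ | c
  · have himg : (Finset.univ.filter (fun v : Fin 2 → K => v ≠ 0)).filter
        (fun v => lineOf v = none)
        = Finset.univ.image (fun t : Kˣ => ![(0 : K), (t : K)]) := by
      ext v
      simp only [Finset.mem_filter, Finset.mem_image, Finset.mem_univ, true_and]
      simp only [lineOf]
      constructor
      · rintro ⟨hv, hl⟩
        have h0 : v 0 = 0 := by
          by_contra h; simp [h] at hl
        have h1 : v 1 ≠ 0 := by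
          rcases ne_zero_vec_iff.mp hv with h | h
          · exact absurd h0 h
          · exact h
        refine ⟨Units.mk0 _ h1, ?_⟩
        funext i; fin_cases i <;> simp [h0]
      · rintro ⟨t, rfl⟩
        refine ⟨ne_zero_vec_iff.mpr (Or.inr (by simp [t.ne_zero])), by simp⟩
    rw [himg, Finset.card_image_of_injective, Finset.card_univ, Fintype.card_units]
    intro t t' h
    have := congrFun h 1
    simp at this
    exact Units.ext this
  · have himg : (Finset.univ.filter (fun v : Fin 2 → K => v ≠ 0)).filter
        (fun v => lineOf v = some c)
        = Finset.univ.image (fun t : Kˣ => ![(t : K), c * t]) := by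
      ext v
      simp only [Finset.mem_filter, Finset.mem_image, Finset.mem_univ, true_and]
      simp only [lineOf]
      constructor
      · rintro ⟨hv, hl⟩
        have h0 : v 0 ≠ 0 := by
          by_contra h; simp [h] at hl
        rw [if_neg h0] at hl
        have hc : v 1 / v 0 = c := by injection hl
        rw [div_eq_iff h0] at hc
        refine ⟨Units.mk0 _ h0, ?_⟩
        funext i; fin_cases i
        · simp
        · simp [hc]
      · rintro ⟨t, rfl⟩
        refine ⟨ne_zero_vec_iff.mpr (Or.inl (by simp [t.ne_zero])), ?_⟩
        rw [if_neg (by simp [t.ne_zero])]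
        simp only [Matrix.cons_val_one, Matrix.head_cons, Matrix.cons_val_zero,
          Option.some.injEq]
        field_simp
    rw [himg, Finset.card_image_of_injective, Finset.card_univ, Fintype.card_units]
    intro t t' h
    have := congrFun h 0
    simp at this
    exact Units.ext this

/-- Sum over nonzero vectors decomposes into lines. -/
lemma sum_Wt_lines (θ₁ θ₂ : Kˣ →* ℂˣ) (g : GL2) :
    ∑ v ∈ Finset.univ.filter (fun v : Fin 2 → K => v ≠ 0), Wt θ₁ θ₂ g v
      = (Fintype.card K - 1 : ℕ) • ∑ ℓ : Option K, Wt θ₁ θ₂ g (rep ℓ) := by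
  rw [← Finset.sum_fiberwise_of_maps_to (g := lineOf) (t := Finset.univ)
    (fun v _ => Finset.mem_univ _) (Wt θ₁ θ₂ g)]
  rw [Finset.smul_sum]
  apply Finset.sum_congr rfl
  intro ℓ _
  have hterm : ∀ v ∈ (Finset.univ.filter (fun v : Fin 2 → K => v ≠ 0)).filter
      (fun v => lineOf v = ℓ), Wt θ₁ θ₂ g v = Wt θ₁ θ₂ g (rep ℓ) := by
    intro v hv
    simp only [Finset.mem_filter] at hv
    rw [Wt_eq_rep θ₁ θ₂ g v hv.1.2, hv.2]
  rw [Finset.sum_congr rfl hterm, Finset.sum_const, card_fiber_line]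

/-- The full Frobenius-formula sum as a sum over lines. -/
lemma sum_indB (θ₁ θ₂ : Kˣ →* ℂˣ) (g : GL2) :
    ∑ u : GL2, (if ((u⁻¹ * g * u : GL2) : M2) 1 0 = 0 then
        extK θ₁ (((u⁻¹ * g * u : GL2) : M2) 0 0) *
        extK θ₂ (((u⁻¹ * g * u : GL2) : M2) 1 1)
      else 0)
    = ((Fintype.card K ^ 2 - Fintype.card K) * (Fintype.card K - 1) : ℕ) •
        ∑ ℓ : Option K, Wt θ₁ θ₂ g (rep ℓ) := by
  have h1 : ∑ u : GL2, (if ((u⁻¹ * g * u : GL2) : M2) 1 0 = 0 then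
        extK θ₁ (((u⁻¹ * g * u : GL2) : M2) 0 0) *
        extK θ₂ (((u⁻¹ * g * u : GL2) : M2) 1 1)
      else 0) = ∑ u : GL2, Wt θ₁ θ₂ g (fun i => (u : M2) i 0) :=
    Finset.sum_congr rfl (fun u _ => keyA θ₁ θ₂ g u)
  rw [h1, Finset.sum_comp (Wt θ₁ θ₂ g) (fun u : GL2 => fun i => (u : M2) i 0), image_col0]
  have h2 : ∀ v ∈ Finset.univ.filter (fun v : Fin 2 → K => v ≠ 0),
      (Finset.univ.filter (fun u : GL2 => (fun i => (u : M2) i 0) = v)).card • Wt θ₁ θ₂ g v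
        = (Fintype.card K ^ 2 - Fintype.card K) • Wt θ₁ θ₂ g v := by
    intro v hv
    simp only [Finset.mem_filter, Finset.mem_univ, true_and] at hv
    rw [card_fiber_col0 v hv]
  rw [Finset.sum_congr rfl h2, ← Finset.smul_sum, sum_Wt_lines, ← smul_assoc]
  congr 1

end Dev3

section Dev4
variable {F K : Type*} [Field F] [Field K] [Fintype F] [Fintype K] [Algebra F K]

lemma charK {q p n : ℕ} (hp : p.Prime) (hq : q = p ^ n) (hn : n ≠ 0)
    (hK : Fintype.card K = q ^ 2) : CharP K p := by
  obtain ⟨m, hpm, hcard⟩ := FiniteField.card K (ringChar K)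
  have hdvd : p ∣ ringChar K ^ (m : ℕ) := by
    rw [← hcard, hK, hq, ← pow_mul]
    exact dvd_pow_self p (by positivity)
  have hpeq : p = ringChar K :=
    (Nat.prime_dvd_prime_iff_eq hp hpm).mp (hp.dvd_of_dvd_pow hdvd)
  rw [hpeq]
  exact ringChar.charP K

lemma q_pos {q p n : ℕ} (hp : p.Prime) (hq : q = p ^ n) : 0 < q := by
  rw [hq]; exact pow_pos hp.pos n

lemma one_lt_q {q p n : ℕ} (hp : p.Prime) (hq : q = p ^ n) (hn : n ≠ 0) : 1 < q := by
  rw [hq]; exact Nat.one_lt_pow hn hp.one_lt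

lemma frobq_add {q p n : ℕ} (hp : p.Prime) (hq : q = p ^ n) (hn : n ≠ 0)
    (hK : Fintype.card K = q ^ 2) (a b : K) : (a + b) ^ q = a ^ q + b ^ q := by
  haveI : Fact p.Prime := ⟨hp⟩
  haveI : CharP K p := charK hp hq hn hK
  rw [hq]
  exact add_pow_char_pow a b p n
  
lemma frobq_sub {q p n : ℕ} (hp : p.Prime) (hq : q = p ^ n) (hn : n ≠ 0)
    (hK : Fintype.card K = q ^ 2) (a b : K) : (a - b) ^ q = a ^ q - b ^ q := by
  haveI : Fact p.Prime := ⟨hp⟩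
  haveI : CharP K p := charK hp hq hn hK
  rw [hq]
  exact sub_pow_char_pow a b n

lemma pow_qq (q : ℕ) (hK : Fintype.card K = q ^ 2) (a : K) : (a ^ q) ^ q = a := by
  rw [← pow_mul, ← sq, ← hK]
  exact FiniteField.pow_card a

/-- Frobenius-fixed elements of K are exactly the image of F. -/
lemma mem_range_iff_pow_q {q p n : ℕ} (hp : p.Prime) (hq : q = p ^ n) (hn : n ≠ 0)
    (hF : Fintype.card F = q) (z : K) :
    z ∈ Set.range (algebraMap F K) ↔ z ^ q = z := by
  constructor
  · rintro ⟨t, rfl⟩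
    rw [← map_pow, ← hF, FiniteField.pow_card]
  · intro hz
    have h1q : 1 < q := one_lt_q hp hq hn
    classical
    set S : Finset K := Finset.univ.filter (fun z : K => z ^ q = z) with hS
    have hsub : Finset.univ.image (algebraMap F K) ⊆ S := by
      intro w hw
      simp only [Finset.mem_image, Finset.mem_univ, true_and] at hw
      obtain ⟨t, rfl⟩ := hw
      simp only [hS, Finset.mem_filter, Finset.mem_univ, true_and]
      rw [← map_pow, ← hF, FiniteField.pow_card]
    have hcard_im : (Finset.univ.image (algebraMap F K)).card = q := by
      rw [Finset.card_image_of_injective _ (algebraMap F K).injective,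
        Finset.card_univ, hF]
    have hScard : S.card ≤ q := by
      have hroots : S ⊆ (Polynomial.X ^ q - Polynomial.X : Polynomial K).roots.toFinset := by
        intro w hw
        simp only [hS, Finset.mem_filter, Finset.mem_univ, true_and] at hw
        rw [Multiset.mem_toFinset, Polynomial.mem_roots
          (FiniteField.X_pow_card_sub_X_ne_zero K h1q)]
        simp [Polynomial.IsRoot, sub_eq_zero, hw]
      calc S.card ≤ _ := Finset.card_le_card hroots
        _ ≤ _ := (Polynomial.X ^ q - Polynomial.X : Polynomial K).roots.toFinset_card_le
        _ ≤ _ := (Polynomial.X ^ q - Polynomial.X : Polynomial K).card_roots'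
        _ = q := FiniteField.X_pow_card_sub_X_natDegree_eq K h1q
    have heq : S = Finset.univ.image (algebraMap F K) :=
      (Finset.eq_of_subset_of_card_le hsub (by rw [hcard_im]; exact hScard)).symm
    have hzS : z ∈ S := by simp [hS, hz]
    rw [heq] at hzS
    simp only [Finset.mem_image, Finset.mem_univ, true_and] at hzS
    obtain ⟨t, ht⟩ := hzS
    exact ⟨t, ht⟩

end Dev4

section Dev5
variable {F K : Type*} [Field F] [Field K] [Algebra F K]

local notation "M2" => Matrix (Fin 2) (Fin 2) K
local notation "GL2" => (Matrix (Fin 2) (Fin 2) K)ˣ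

lemma mem_Hsub_iff {u : GL2} :
    u ∈ Hsub F K ↔ ∀ i j, (u : M2) i j ∈ Set.range (algebraMap F K) := by
  constructor
  · rintro ⟨w, rfl⟩ i j
    refine ⟨(w : Matrix (Fin 2) (Fin 2) F) i j, ?_⟩
    simp [RingHom.mapMatrix_apply, Matrix.map_apply]
  · intro h
    classical
    set A : Matrix (Fin 2) (Fin 2) F := Matrix.of (fun i j => (h i j).choose) with hA
    have hAmap : A.map (algebraMap F K) = (u : M2) := by
      apply Matrix.ext; intro i j
      simp only [Matrix.map_apply, hA, Matrix.of_apply]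
      exact (h i j).choose_spec
    have hdet : A.det ≠ 0 := by
      intro h0
      apply det_coe_ne_zero u
      rw [← hAmap, ← RingHom.mapMatrix_apply, ← RingHom.map_det, h0, map_zero]
    have hunit : IsUnit A := (Matrix.isUnit_iff_isUnit_det A).mpr (isUnit_iff_ne_zero.mpr hdet)
    refine ⟨hunit.unit, ?_⟩
    apply Units.ext
    rw [Units.coe_map]
    simp only [RingHom.toMonoidHom_eq_coe, MonoidHom.coe_coe, IsUnit.unit_spec]
    rw [RingHom.mapMatrix_apply]
    exact hAmap

lemma diagGL_coe (x y : Kˣ) : ((diagGL x y : GL2) : M2) = !![(x : K), 0; 0, (y : K)] :=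
  IsUnit.unit_spec _

lemma diag_mul_coe (x y : Kˣ) (h : GL2) :
    ((diagGL x y * h : GL2) : M2) = !![(x : K), 0; 0, (y : K)] * (h : M2) := by
  rw [Units.val_mul, diagGL_coe]

lemma mulVec_diag_mul (x y : Kˣ) (A : M2) (v : Fin 2 → K) :
    (!![(x : K), 0; 0, (y : K)] * A).mulVec v
      = ![(x : K) * A.mulVec v 0, (y : K) * A.mulVec v 1] := by
  funext i
  fin_cases i <;>
    simp [Matrix.mulVec, Matrix.mul_apply, dotProduct, Fin.sum_univ_two] <;> ring

lemma det_diag_mul (x y : Kˣ) (A : M2) :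
    (!![(x : K), 0; 0, (y : K)] * A).det = (x : K) * y * A.det := by
  rw [Matrix.det_mul, Matrix.det_fin_two_of]
  ring

lemma mulVec_e1 (A : M2) : A.mulVec ![1, 0] = ![A 0 0, A 1 0] := by
  funext i
  fin_cases i <;> simp [Matrix.mulVec, dotProduct, Fin.sum_univ_two]

lemma mulVec_e2 (A : M2) : A.mulVec ![0, 1] = ![A 0 1, A 1 1] := by
  funext i
  fin_cases i <;> simp [Matrix.mulVec, dotProduct, Fin.sum_univ_two]

lemma mulVec_1c (A : M2) (c : K) :
    A.mulVec ![1, c] = ![A 0 0 + A 0 1 * c, A 1 0 + A 1 1 * c] := by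
  funext i
  fin_cases i <;> simp [Matrix.mulVec, dotProduct, Fin.sum_univ_two]

variable (θ₁ θ₂ : Kˣ →* ℂˣ) (x y : Kˣ)

lemma Wt_at_e2 (h : GL2) :
    Wt θ₁ θ₂ (diagGL x y * h) ![0, 1]
      = if (h : M2) 0 1 = 0 then
          ((θ₁ y : ℂˣ) : ℂ) * ((θ₂ x : ℂˣ) : ℂ) *
            (extK θ₁ ((h : M2) 1 1) * extK θ₂ ((h : M2) 0 0))
        else 0 := by
  set A : M2 := (h : M2) with hA
  have hdA : A.det ≠ 0 := det_coe_ne_zero h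
  unfold Wt
  rw [diag_mul_coe, mulVec_diag_mul, mulVec_e2, det_diag_mul]
  simp only [Matrix.cons_val_zero, Matrix.cons_val_one, Matrix.head_cons]
  rw [← hA]
  by_cases h01 : A 0 1 = 0
  · have hcond : (y : K) * A 1 1 * 0 = (x : K) * A 0 1 * 1 := by
      rw [h01]; ring
    erw [if_pos hcond, if_pos h01]
    have hdet2 : A.det = A 0 0 * A 1 1 := by
      rw [Matrix.det_fin_two, h01]; ring
    have h11 : A 1 1 ≠ 0 := by
      intro hz; apply hdA; rw [hdet2, hz, mul_zero]
    have h00 : A 0 0 ≠ 0 := by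
      intro hz; apply hdA; rw [hdet2, hz, zero_mul]
    have hslp : slp (!![(x : K), 0; 0, (y : K)] * A) ![0, 1]
        = (y : K) * A 1 1 := by
      unfold slp
      rw [mulVec_diag_mul, mulVec_e2]
      simp
    rw [hslp]
    have harg : (x : K) * y * A.det / ((y : K) * A 1 1) = (x : K) * A 0 0 := by
      rw [hdet2]
      field_simp
    rw [harg]
    rw [show ((y : K) * A 1 1) = ((y : Kˣ) : K) * A 1 1 from rfl, extK_mul, extK_unit]
    rw [show ((x : K) * A 0 0) = ((x : Kˣ) : K) * A 0 0 from rfl, extK_mul, extK_unit]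
    ring
  · have hcond : ¬ ((y : K) * A 1 1 * 0 = (x : K) * A 0 1 * 1) := by
      simp only [mul_zero, mul_one]
      intro hz
      rcases mul_eq_zero.mp hz.symm with hz' | hz'
      · exact x.ne_zero hz'
      · exact h01 hz'
    erw [if_neg hcond, if_neg h01]

lemma Wt_at_e1 (h : GL2) :
    Wt θ₁ θ₂ (diagGL x y * h) ![1, 0]
      = if (h : M2) 1 0 = 0 then
          ((θ₁ x : ℂˣ) : ℂ) * ((θ₂ y : ℂˣ) : ℂ) *
            (extK θ₁ ((h : M2) 0 0) * extK θ₂ ((h : M2) 1 1))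
        else 0 := by
  set A : M2 := (h : M2) with hA
  have hdA : A.det ≠ 0 := det_coe_ne_zero h
  unfold Wt
  rw [diag_mul_coe, mulVec_diag_mul, mulVec_e1, det_diag_mul]
  simp only [Matrix.cons_val_zero, Matrix.cons_val_one, Matrix.head_cons]
  rw [← hA]
  by_cases h10 : A 1 0 = 0
  · have hcond : (y : K) * A 1 0 * 1 = (x : K) * A 0 0 * 0 := by
      rw [h10]; ring
    erw [if_pos hcond, if_pos h10]
    have hdet2 : A.det = A 0 0 * A 1 1 := by
      rw [Matrix.det_fin_two, h10]; ring
    have h00 : A 0 0 ≠ 0 := by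
      intro hz; apply hdA; rw [hdet2, hz, zero_mul]
    have hslp : slp (!![(x : K), 0; 0, (y : K)] * A) ![1, 0]
        = (x : K) * A 0 0 := by
      unfold slp
      rw [mulVec_diag_mul, mulVec_e1]
      simp
    rw [hslp]
    have harg : (x : K) * y * A.det / ((x : K) * A 0 0) = (y : K) * A 1 1 := by
      rw [hdet2]
      field_simp
    rw [harg]
    rw [show ((x : K) * A 0 0) = ((x : Kˣ) : K) * A 0 0 from rfl, extK_mul, extK_unit]
    rw [show ((y : K) * A 1 1) = ((y : Kˣ) : K) * A 1 1 from rfl, extK_mul, extK_unit]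
    ring
  · have hcond : ¬ ((y : K) * A 1 0 * 1 = (x : K) * A 0 0 * 0) := by
      simp only [mul_zero, mul_one]
      intro hz
      rcases mul_eq_zero.mp hz with hz' | hz'
      · exact y.ne_zero hz'
      · exact h10 hz'
    erw [if_neg hcond, if_neg h10]

lemma Wt_at_c (c : K) (h : GL2) :
    Wt θ₁ θ₂ (diagGL x y * h) ![1, c]
      = if (y : K) * ((h : M2) 1 0 + (h : M2) 1 1 * c)
            = (x : K) * ((h : M2) 0 0 + (h : M2) 0 1 * c) * c then
          extK θ₁ ((x : K) * ((h : M2) 0 0 + (h : M2) 0 1 * c)) *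
          extK θ₂ ((x : K) * y * (h : M2).det /
            ((x : K) * ((h : M2) 0 0 + (h : M2) 0 1 * c)))
        else 0 := by
  set A : M2 := (h : M2) with hA
  unfold Wt
  rw [diag_mul_coe, mulVec_diag_mul, mulVec_1c, det_diag_mul]
  simp only [Matrix.cons_val_zero, Matrix.cons_val_one, Matrix.head_cons, mul_one]
  have hslp : slp (!![(x : K), 0; 0, (y : K)] * A) ![1, c]
      = (x : K) * (A 0 0 + A 0 1 * c) := by
    unfold slp
    rw [mulVec_diag_mul, mulVec_1c]
    simp
  rw [hslp]

end Dev5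

section Dev6
variable {F K : Type*} [Field F] [Field K] [Fintype F] [Fintype K] [Algebra F K]

local notation "M2" => Matrix (Fin 2) (Fin 2) K
local notation "GL2" => (Matrix (Fin 2) (Fin 2) K)ˣ

open scoped Classical

lemma sum_subgroup_if (Hs : Subgroup GL2) (P : GL2 → Prop) (f : GL2 → ℂ) :
    ∑ h : ↥Hs, (if P (h : GL2) then f (h : GL2) else 0)
      = ∑ b ∈ Finset.univ.filter (fun b => P b ∧ b ∈ Hs), f b := by
  classical
  rw [← Finset.sum_filter]
  refine Finset.sum_bij' (fun (a : ↥Hs) _ => (a : GL2))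
    (fun b hb => (⟨b, (Finset.mem_filter.mp hb).2.2⟩ : ↥Hs)) ?_ ?_ ?_ ?_ ?_
  · intro a ha
    simp only [Finset.mem_filter, Finset.mem_univ, true_and] at ha ⊢
    exact ⟨ha, a.2⟩
  · intro b hb
    simp only [Finset.mem_filter, Finset.mem_univ, true_and] at hb ⊢
    exact hb.1
  · intro a _; rfl
  · intro b _; rfl
  · intro a _; rfl

variable (θ₁ θ₂ : Kˣ →* ℂˣ) (x y : Kˣ)

/-- line `e₁` contribution -/
lemma sum_line_e1 :
    ∑ h : ↥(Hsub F K), Wt θ₁ θ₂ (diagGL x y * (h : GL2)) ![1, 0]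
      = ((θ₁ x : ℂˣ) : ℂ) * ((θ₂ y : ℂˣ) : ℂ) *
          ∑ b ∈ Finset.univ.filter (fun b : GL2 =>
              (b : M2) 1 0 = 0 ∧ b ∈ Hsub F K),
            extK θ₁ ((b : M2) 0 0) * extK θ₂ ((b : M2) 1 1) := by
  have h1 : ∀ h : ↥(Hsub F K), Wt θ₁ θ₂ (diagGL x y * (h : GL2)) ![1, 0]
      = if ((h : GL2) : M2) 1 0 = 0 then
          ((θ₁ x : ℂˣ) : ℂ) * ((θ₂ y : ℂˣ) : ℂ) *
            (extK θ₁ (((h : GL2) : M2) 0 0) * extK θ₂ (((h : GL2) : M2) 1 1))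
        else 0 := fun h => Wt_at_e1 θ₁ θ₂ x y (h : GL2)
  rw [Finset.sum_congr rfl (fun h _ => h1 h),
    sum_subgroup_if (Hsub F K) (fun b => (b : M2) 1 0 = 0)
      (fun b => ((θ₁ x : ℂˣ) : ℂ) * ((θ₂ y : ℂˣ) : ℂ) *
        (extK θ₁ ((b : M2) 0 0) * extK θ₂ ((b : M2) 1 1))),
    Finset.mul_sum]

/-- the swap matrix -/
noncomputable def Jmat : GL2 := glOf !![(0 : K), 1; 1, 0]

lemma Jmat_coe : ((Jmat : GL2) : M2) = !![(0 : K), 1; 1, 0] := by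
  apply glOf_coe
  rw [Matrix.det_fin_two_of]
  simp

lemma Jmat_mem : (Jmat : GL2) ∈ Hsub F K := by
  rw [mem_Hsub_iff]
  intro i j
  rw [Jmat_coe]
  fin_cases i <;> fin_cases j
  · exact ⟨0, by simp⟩
  · exact ⟨1, by simp⟩
  · exact ⟨1, by simp⟩
  · exact ⟨0, by simp⟩

lemma JbJ_coe (b : GL2) :
    ((Jmat * b * Jmat : GL2) : M2)
      = !![(b : M2) 1 1, (b : M2) 1 0; (b : M2) 0 1, (b : M2) 0 0] := by
  rw [Units.val_mul, Units.val_mul, Jmat_coe]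
  apply Matrix.ext; intro i j
  fin_cases i <;> fin_cases j <;>
    simp [Matrix.mul_apply, Matrix.vecMul, dotProduct, Fin.sum_univ_two]

lemma Jmat_sq : (Jmat : GL2) * Jmat = 1 := by
  apply Units.ext
  rw [Units.val_mul, Jmat_coe]
  apply Matrix.ext; intro i j
  fin_cases i <;> fin_cases j <;>
    simp [Matrix.mul_apply, Fin.sum_univ_two, Matrix.one_apply]

/-- line `e₂` contribution -/
lemma sum_line_e2 :
    ∑ h : ↥(Hsub F K), Wt θ₁ θ₂ (diagGL x y * (h : GL2)) ![0, 1]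
      = ((θ₁ y : ℂˣ) : ℂ) * ((θ₂ x : ℂˣ) : ℂ) *
          ∑ b ∈ Finset.univ.filter (fun b : GL2 =>
              (b : M2) 1 0 = 0 ∧ b ∈ Hsub F K),
            extK θ₁ ((b : M2) 0 0) * extK θ₂ ((b : M2) 1 1) := by
  have h1 : ∀ h : ↥(Hsub F K), Wt θ₁ θ₂ (diagGL x y * (h : GL2)) ![0, 1]
      = if ((h : GL2) : M2) 0 1 = 0 then
          ((θ₁ y : ℂˣ) : ℂ) * ((θ₂ x : ℂˣ) : ℂ) *
            (extK θ₁ (((h : GL2) : M2) 1 1) * extK θ₂ (((h : GL2) : M2) 0 0))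
        else 0 := fun h => Wt_at_e2 θ₁ θ₂ x y (h : GL2)
  rw [Finset.sum_congr rfl (fun h _ => h1 h),
    sum_subgroup_if (Hsub F K) (fun b => (b : M2) 0 1 = 0)
      (fun b => ((θ₁ y : ℂˣ) : ℂ) * ((θ₂ x : ℂˣ) : ℂ) *
        (extK θ₁ ((b : M2) 1 1) * extK θ₂ ((b : M2) 0 0))),
    Finset.mul_sum]
  refine Finset.sum_nbij' (fun b => Jmat * b * Jmat) (fun b => Jmat * b * Jmat) ?_ ?_ ?_ ?_ ?_
  · intro b hb
    simp only [Finset.mem_filter, Finset.mem_univ, true_and] at hb ⊢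
    constructor
    · rw [JbJ_coe]; simpa using hb.1
    · exact Subgroup.mul_mem _ (Subgroup.mul_mem _ Jmat_mem hb.2) Jmat_mem
  · intro b hb
    simp only [Finset.mem_filter, Finset.mem_univ, true_and] at hb ⊢
    constructor
    · rw [JbJ_coe]; simpa using hb.1
    · exact Subgroup.mul_mem _ (Subgroup.mul_mem _ Jmat_mem hb.2) Jmat_mem
  · intro b _
    calc Jmat * (Jmat * b * Jmat) * Jmat
        = (Jmat * Jmat) * b * (Jmat * Jmat) := by group
      _ = b := by rw [Jmat_sq]; group
  · intro b _
    calc Jmat * (Jmat * b * Jmat) * Jmat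
        = (Jmat * Jmat) * b * (Jmat * Jmat) := by group
      _ = b := by rw [Jmat_sq]; group
  · intro b _
    rw [JbJ_coe]
    show _ = _ * (extK θ₁ ((b : M2) 1 1) * extK θ₂ ((b : M2) 0 0))
    ring

/-- rational nonzero `c` lines contribute 0 -/
lemma sum_line_rat (c : K) (hcR : c ∈ Set.range (algebraMap F K)) (hc0 : c ≠ 0)
    (hxy : ((x⁻¹ * y : Kˣ) : K) ∉ Set.range (algebraMap F K)) :
    ∑ h : ↥(Hsub F K), Wt θ₁ θ₂ (diagGL x y * (h : GL2)) ![1, c] = 0 := by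
  apply Finset.sum_eq_zero
  intro h _
  rw [Wt_at_c]
  set A : M2 := ((h : GL2) : M2) with hA
  have hmem : ∀ i j, A i j ∈ Set.range (algebraMap F K) := mem_Hsub_iff.mp h.2
  rw [if_neg]
  intro hcond
  set lam : K := A 0 0 + A 0 1 * c with hlam
  set kap : K := A 1 0 + A 1 1 * c with hkap
  have hlam0 : lam ≠ 0 := by
    intro h0
    have hk0 : kap = 0 := by
      have : (y : K) * kap = 0 := by rw [hcond, h0]; ring
      rcases mul_eq_zero.mp this with h' | h'
      · exact absurd h' y.ne_zero
      · exact h'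
    have hmv : A.mulVec ![1, c] = 0 := by
      rw [mulVec_1c]
      funext i; fin_cases i
      · simpa using h0
      · simpa using hk0
    have : (1 : K) = 0 := by
      have h2 := congrArg (fun v => (((h : GL2)⁻¹ : GL2) : M2).mulVec v) hmv
      simp only [Matrix.mulVec_mulVec, Matrix.mulVec_zero] at h2
      rw [Matrix.coe_units_inv, Matrix.nonsing_inv_mul _
        (isUnit_iff_ne_zero.mpr (det_coe_ne_zero (h : GL2))), Matrix.one_mulVec] at h2
      simpa using congrFun h2 0
    exact one_ne_zero this
  have hkap0 : kap ≠ 0 := by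
    intro h0
    rw [h0, mul_zero] at hcond
    rcases mul_eq_zero.mp hcond.symm with h' | h'
    · rcases mul_eq_zero.mp h' with h'' | h''
      · exact x.ne_zero h''
      · exact hlam0 h''
    · exact hc0 h'
  apply hxy
  have hval : ((x⁻¹ * y : Kˣ) : K) = lam * c / kap := by
    have hxv : ((x⁻¹ * y : Kˣ) : K) = (x : K)⁻¹ * y := by
      rw [Units.val_mul, Units.val_inv_eq_inv_val]
    rw [hxv]
    rw [eq_div_iff hkap0]
    apply mul_left_cancel₀ x.ne_zero
    field_simp
    linear_combination hcond
  rw [hval]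
  have hlmem : lam ∈ Set.range (algebraMap F K) := by
    obtain ⟨a1, ha1⟩ := hmem 0 0
    obtain ⟨a2, ha2⟩ := hmem 0 1
    obtain ⟨a3, ha3⟩ := hcR
    exact ⟨a1 + a2 * a3, by rw [map_add, map_mul, ha1, ha2, ha3]⟩
  have hkmem : kap ∈ Set.range (algebraMap F K) := by
    obtain ⟨a1, ha1⟩ := hmem 1 0
    obtain ⟨a2, ha2⟩ := hmem 1 1
    obtain ⟨a3, ha3⟩ := hcR
    exact ⟨a1 + a2 * a3, by rw [map_add, map_mul, ha1, ha2, ha3]⟩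
  obtain ⟨l, hl⟩ := hlmem
  obtain ⟨k, hk⟩ := hkmem
  obtain ⟨cc, hcc⟩ := hcR
  exact ⟨l * cc / k, by rw [map_div₀, map_mul, hl, hk, hcc]⟩

end Dev6

section Dev7
variable {F K : Type*} [Field F] [Field K] [Fintype F] [Fintype K] [Algebra F K]

local notation "M2" => Matrix (Fin 2) (Fin 2) K
local notation "GL2" => (Matrix (Fin 2) (Fin 2) K)ˣ

open scoped Classical

/-- the ratio r = x/y -/
def rK (x y : Kˣ) : K := (x : K) * (y : K)⁻¹

/-- the value μ(c) -/
noncomputable def muC (q : ℕ) (x y : Kˣ) (c : K) : K :=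
  ((rK x y) ^ q * c ^ q - rK x y * c) / (c ^ q - c)

/-- candidate matrix with prescribed action on (1,c) and (1,c^q) -/
noncomputable def hmat (q : ℕ) (c u0 u1 : K) : M2 :=
  !![(u0 * c ^ q - u0 ^ q * c) / (c ^ q - c), (u0 ^ q - u0) / (c ^ q - c);
     (u1 * c ^ q - u1 ^ q * c) / (c ^ q - c), (u1 ^ q - u1) / (c ^ q - c)]

lemma hmat_e00 (q : ℕ) (c u0 u1 : K) :
    hmat q c u0 u1 0 0 = (u0 * c ^ q - u0 ^ q * c) / (c ^ q - c) := rfl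
lemma hmat_e01 (q : ℕ) (c u0 u1 : K) :
    hmat q c u0 u1 0 1 = (u0 ^ q - u0) / (c ^ q - c) := rfl
lemma hmat_e10 (q : ℕ) (c u0 u1 : K) :
    hmat q c u0 u1 1 0 = (u1 * c ^ q - u1 ^ q * c) / (c ^ q - c) := rfl
lemma hmat_e11 (q : ℕ) (c u0 u1 : K) :
    hmat q c u0 u1 1 1 = (u1 ^ q - u1) / (c ^ q - c) := rfl

variable (θ₁ θ₂ : Kˣ →* ℂˣ) (x y : Kˣ)

lemma rK_not_mem (hxy : ((x⁻¹ * y : Kˣ) : K) ∉ Set.range (algebraMap F K)) :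
    rK x y ∉ Set.range (algebraMap F K) := by
  rintro ⟨t, ht⟩
  apply hxy
  have ht0 : t ≠ 0 := by
    rintro rfl
    rw [map_zero] at ht
    exact (mul_ne_zero x.ne_zero (inv_ne_zero y.ne_zero)) ht.symm
  refine ⟨t⁻¹, ?_⟩
  rw [map_inv₀, ht]
  rw [Units.val_mul, Units.val_inv_eq_inv_val, rK]
  rw [mul_inv, inv_inv, mul_comm]

lemma lam_ne_zero (c : K) (h : GL2)
    (hcond : (y : K) * ((h : M2) 1 0 + (h : M2) 1 1 * c)
      = (x : K) * ((h : M2) 0 0 + (h : M2) 0 1 * c) * c) :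
    (h : M2) 0 0 + (h : M2) 0 1 * c ≠ 0 := by
  intro h0
  have hk0 : (h : M2) 1 0 + (h : M2) 1 1 * c = 0 := by
    rw [h0] at hcond
    have : (y : K) * ((h : M2) 1 0 + (h : M2) 1 1 * c) = 0 := by rw [hcond]; ring
    rcases mul_eq_zero.mp this with h' | h'
    · exact absurd h' y.ne_zero
    · exact h'
  have hmv : (h : M2).mulVec ![1, c] = 0 := by
    rw [mulVec_1c]
    funext i; fin_cases i
    · simpa using h0
    · simpa using hk0
  have h2 := congrArg (fun v => ((h⁻¹ : GL2) : M2).mulVec v) hmv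
  simp only [Matrix.mulVec_mulVec, Matrix.mulVec_zero] at h2
  rw [Matrix.coe_units_inv, Matrix.nonsing_inv_mul _
    (isUnit_iff_ne_zero.mpr (det_coe_ne_zero h)), Matrix.one_mulVec] at h2
  have h3 : (1 : K) = 0 := by simpa using congrFun h2 0
  exact one_ne_zero h3

/-- entries of `hmat` are Frobenius-fixed. -/
lemma hmat_fixed {q p n : ℕ} (hp : p.Prime) (hq : q = p ^ n) (hn : n ≠ 0)
    (hK : Fintype.card K = q ^ 2) {c : K} (u : K) :
    ((u * c ^ q - u ^ q * c) / (c ^ q - c)) ^ q = (u * c ^ q - u ^ q * c) / (c ^ q - c)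
    ∧ ((u ^ q - u) / (c ^ q - c)) ^ q = (u ^ q - u) / (c ^ q - c) := by
  have hqq : ∀ a : K, (a ^ q) ^ q = a := pow_qq q hK
  constructor
  · rw [div_pow, frobq_sub hp hq hn hK, frobq_sub hp hq hn hK, mul_pow, mul_pow,
      hqq u, hqq c]
    rw [show u ^ q * c - u * c ^ q = -(u * c ^ q - u ^ q * c) by ring,
      show c - c ^ q = -(c ^ q - c) by ring, neg_div_neg_eq]
  · rw [div_pow, frobq_sub hp hq hn hK, frobq_sub hp hq hn hK, hqq u, hqq c]
    rw [show u - u ^ q = -(u ^ q - u) by ring,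
      show c - c ^ q = -(c ^ q - c) by ring, neg_div_neg_eq]

/-- row identities and determinant of `hmat`. -/
lemma hmat_row (q : ℕ) {c : K} (hc : c ^ q - c ≠ 0) (u0 u1 : K) :
    hmat q c u0 u1 0 0 + hmat q c u0 u1 0 1 * c = u0
    ∧ hmat q c u0 u1 1 0 + hmat q c u0 u1 1 1 * c = u1
    ∧ (hmat q c u0 u1).det = (u0 * u1 ^ q - u0 ^ q * u1) / (c ^ q - c) := by
  refine ⟨?_, ?_, ?_⟩
  · rw [hmat_e00, hmat_e01]; field_simp; ring
  · rw [hmat_e10, hmat_e11]; field_simp; ring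
  · rw [Matrix.det_fin_two, hmat_e00, hmat_e01, hmat_e10, hmat_e11]
    field_simp; ring

lemma hmat_det_mu {q : ℕ} {c : K} (hcq : c ^ q - c ≠ 0) (L : K) :
    (hmat q c L (rK x y * c * L)).det = L * L ^ q * muC q x y c := by
  rw [(hmat_row q hcq L (rK x y * c * L)).2.2, muC, mul_pow, mul_pow]
  field_simp

/-- structure of group elements satisfying the eigenline condition. -/
lemma cond_struct {q p n : ℕ} (hp : p.Prime) (hq : q = p ^ n) (hn : n ≠ 0)
    (hF : Fintype.card F = q) (hK : Fintype.card K = q ^ 2)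
    {c : K} (hc : c ∉ Set.range (algebraMap F K)) (h : GL2)
    (hmem : h ∈ Hsub F K)
    (hcond : (y : K) * ((h : M2) 1 0 + (h : M2) 1 1 * c)
      = (x : K) * ((h : M2) 0 0 + (h : M2) 0 1 * c) * c) :
    (h : M2) = hmat q c ((h : M2) 0 0 + (h : M2) 0 1 * c)
      (rK x y * c * ((h : M2) 0 0 + (h : M2) 0 1 * c)) := by
  have hcq : c ^ q - c ≠ 0 :=
    sub_ne_zero.mpr (fun he => hc ((mem_range_iff_pow_q hp hq hn hF c).mpr he))
  set A : M2 := (h : M2) with hA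
  have hfix : ∀ i j, (A i j) ^ q = A i j := fun i j =>
    (mem_range_iff_pow_q hp hq hn hF _).mp (mem_Hsub_iff.mp hmem i j)
  have hrow : ∀ i, (A i 0 + A i 1 * c) ^ q = A i 0 + A i 1 * c ^ q := by
    intro i
    rw [frobq_add hp hq hn hK, mul_pow, hfix, hfix]
  have hkap : A 1 0 + A 1 1 * c = rK x y * c * (A 0 0 + A 0 1 * c) := by
    apply mul_left_cancel₀ y.ne_zero
    rw [hcond, rK]
    field_simp
  have key0 : ∀ i, A i 0
      = ((A i 0 + A i 1 * c) * c ^ q - (A i 0 + A i 1 * c) ^ q * c) / (c ^ q - c) := by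
    intro i
    rw [hrow i]
    field_simp
    ring
  have key1 : ∀ i, A i 1
      = ((A i 0 + A i 1 * c) ^ q - (A i 0 + A i 1 * c)) / (c ^ q - c) := by
    intro i
    rw [hrow i]
    field_simp
    ring
  apply Matrix.ext; intro i j
  fin_cases i <;> fin_cases j
  · exact key0 0
  · exact key1 0
  · rw [← hkap]; exact key0 1
  · rw [← hkap]; exact key1 1

/-- properties of the candidate matrix built from `w : Kˣ`. -/
lemma hmat_props {q p n : ℕ} (hp : p.Prime) (hq : q = p ^ n) (hn : n ≠ 0)
    (hF : Fintype.card F = q) (hK : Fintype.card K = q ^ 2)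
    {c : K} (hc : c ∉ Set.range (algebraMap F K)) (w : Kˣ) :
    (hmat q c (w : K) (rK x y * c * w)).det = (w : K) * (w : K) ^ q * muC q x y c
    ∧ (∀ i j, hmat q c (w : K) (rK x y * c * w) i j ∈ Set.range (algebraMap F K))
    ∧ hmat q c (w : K) (rK x y * c * w) 0 0 + hmat q c (w : K) (rK x y * c * w) 0 1 * c
        = (w : K)
    ∧ hmat q c (w : K) (rK x y * c * w) 1 0 + hmat q c (w : K) (rK x y * c * w) 1 1 * c
        = rK x y * c * w := by
  have hcq : c ^ q - c ≠ 0 :=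
    sub_ne_zero.mpr (fun he => hc ((mem_range_iff_pow_q hp hq hn hF c).mpr he))
  obtain ⟨hr0, hr1, hdet⟩ := hmat_row q hcq (w : K) (rK x y * c * w)
  refine ⟨?_, ?_, hr0, hr1⟩
  · exact hmat_det_mu x y hcq (w : K)
  · intro i j
    rw [mem_range_iff_pow_q hp hq hn hF]
    fin_cases i <;> fin_cases j
    · exact (hmat_fixed hp hq hn hK (w : K)).1
    · exact (hmat_fixed hp hq hn hK (w : K)).2
    · exact (hmat_fixed hp hq hn hK (rK x y * c * w)).1
    · exact (hmat_fixed hp hq hn hK (rK x y * c * w)).2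

/-- the sum over the subgroup for an irrational line. -/
lemma sum_line_irr {q p n : ℕ} (hp : p.Prime) (hq : q = p ^ n) (hn : n ≠ 0)
    (hF : Fintype.card F = q) (hK : Fintype.card K = q ^ 2)
    (hxy : ((x⁻¹ * y : Kˣ) : K) ∉ Set.range (algebraMap F K))
    {c : K} (hc : c ∉ Set.range (algebraMap F K)) :
    ∑ h : ↥(Hsub F K), Wt θ₁ θ₂ (diagGL x y * (h : GL2)) ![1, c]
      = ((θ₁ x : ℂˣ) : ℂ) * ((θ₂ y : ℂˣ) : ℂ) *
          (∑ a : Kˣ, ((θ₁ a : ℂˣ) : ℂ) * ((θ₂ (a ^ q) : ℂˣ) : ℂ)) *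
          extK θ₂ (muC q x y c) := by
  have hcq : c ^ q - c ≠ 0 :=
    sub_ne_zero.mpr (fun he => hc ((mem_range_iff_pow_q hp hq hn hF c).mpr he))
  have hWt : ∀ h : ↥(Hsub F K), Wt θ₁ θ₂ (diagGL x y * (h : GL2)) ![1, c]
      = if (y : K) * (((h : GL2) : M2) 1 0 + ((h : GL2) : M2) 1 1 * c)
            = (x : K) * (((h : GL2) : M2) 0 0 + ((h : GL2) : M2) 0 1 * c) * c then
          extK θ₁ ((x : K) * (((h : GL2) : M2) 0 0 + ((h : GL2) : M2) 0 1 * c)) *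
          extK θ₂ ((x : K) * y * ((h : GL2) : M2).det /
            ((x : K) * (((h : GL2) : M2) 0 0 + ((h : GL2) : M2) 0 1 * c)))
        else 0 := fun h => Wt_at_c θ₁ θ₂ x y c (h : GL2)
  rw [Finset.sum_congr rfl (fun h _ => hWt h),
    sum_subgroup_if (Hsub F K)
      (fun b => (y : K) * ((b : M2) 1 0 + (b : M2) 1 1 * c)
        = (x : K) * ((b : M2) 0 0 + (b : M2) 0 1 * c) * c)
      (fun b => extK θ₁ ((x : K) * ((b : M2) 0 0 + (b : M2) 0 1 * c)) *
          extK θ₂ ((x : K) * y * (b : M2).det /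
            ((x : K) * ((b : M2) 0 0 + (b : M2) 0 1 * c))))]
  by_cases hmu : muC q x y c = 0
  · rw [hmu, extK_zero, mul_zero]
    apply Finset.sum_eq_zero
    intro b hb
    simp only [Finset.mem_filter, Finset.mem_univ, true_and] at hb
    obtain ⟨hcond, hmem⟩ := hb
    exfalso
    have hl0 : (b : M2) 0 0 + (b : M2) 0 1 * c ≠ 0 := lam_ne_zero x y c b hcond
    have hstruct := cond_struct x y hp hq hn hF hK hc b hmem hcond
    apply det_coe_ne_zero b
    rw [hstruct, hmat_det_mu x y hcq, hmu, mul_zero]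
  · -- bijection with Kˣ
    have hbij : ∑ b ∈ Finset.univ.filter (fun b : GL2 =>
          ((y : K) * ((b : M2) 1 0 + (b : M2) 1 1 * c)
            = (x : K) * ((b : M2) 0 0 + (b : M2) 0 1 * c) * c) ∧ b ∈ Hsub F K),
        (extK θ₁ ((x : K) * ((b : M2) 0 0 + (b : M2) 0 1 * c)) *
          extK θ₂ ((x : K) * y * (b : M2).det /
            ((x : K) * ((b : M2) 0 0 + (b : M2) 0 1 * c))))
        = ∑ w : Kˣ, ((θ₁ x : ℂˣ) : ℂ) * ((θ₂ y : ℂˣ) : ℂ) *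
            (((θ₁ w : ℂˣ) : ℂ) * ((θ₂ (w ^ q) : ℂˣ) : ℂ)) * extK θ₂ (muC q x y c) := by
      refine Finset.sum_nbij'
        (fun b => if hl : (b : M2) 0 0 + (b : M2) 0 1 * c = 0 then 1
          else Units.mk0 _ hl)
        (fun w => glOf (hmat q c (w : K) (rK x y * c * w))) ?_ ?_ ?_ ?_ ?_
      · intro b _; exact Finset.mem_univ _
      · intro w _
        obtain ⟨hdet, hmem, hr0, hr1⟩ := hmat_props x y hp hq hn hF hK hc w
        have hdet0 : (hmat q c (w : K) (rK x y * c * w)).det ≠ 0 := by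
          rw [hdet]
          exact mul_ne_zero (mul_ne_zero w.ne_zero (pow_ne_zero q w.ne_zero)) hmu
        simp only [Finset.mem_filter, Finset.mem_univ, true_and]
        rw [glOf_coe hdet0]
        constructor
        · rw [hr0, hr1, rK]
          field_simp
        · rw [mem_Hsub_iff]
          intro i j
          rw [glOf_coe hdet0]
          exact hmem i j
      · intro b hb
        simp only [Finset.mem_filter, Finset.mem_univ, true_and] at hb
        obtain ⟨hcond, hmem⟩ := hb
        have hl0 : (b : M2) 0 0 + (b : M2) 0 1 * c ≠ 0 := lam_ne_zero x y c b hcond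
        simp only [dif_neg hl0]
        have hstruct := cond_struct x y hp hq hn hF hK hc b hmem hcond
        apply Units.ext
        have hdetb : ((b : M2)).det ≠ 0 := det_coe_ne_zero b
        have hdet0 : (hmat q c (((b : M2) 0 0 + (b : M2) 0 1 * c))
            (rK x y * c * ((b : M2) 0 0 + (b : M2) 0 1 * c))).det ≠ 0 := by
          rw [← hstruct]; exact hdetb
        rw [glOf_coe (by simpa using hdet0)]
        exact hstruct.symm
      · intro w _
        obtain ⟨hdet, hmem, hr0, hr1⟩ := hmat_props x y hp hq hn hF hK hc w
        have hdet0 : (hmat q c (w : K) (rK x y * c * w)).det ≠ 0 := by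
          rw [hdet]
          exact mul_ne_zero (mul_ne_zero w.ne_zero (pow_ne_zero q w.ne_zero)) hmu
        have hl : (glOf (hmat q c (w : K) (rK x y * c * w)) : M2) 0 0
            + (glOf (hmat q c (w : K) (rK x y * c * w)) : M2) 0 1 * c = (w : K) := by
          rw [glOf_coe hdet0]; exact hr0
        have hlne : (glOf (hmat q c (w : K) (rK x y * c * w)) : M2) 0 0
            + (glOf (hmat q c (w : K) (rK x y * c * w)) : M2) 0 1 * c ≠ 0 := by
          rw [hl]; exact w.ne_zero
        simp only [dif_neg hlne]
        apply Units.ext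
        simpa using hl
      · intro b hb
        simp only [Finset.mem_filter, Finset.mem_univ, true_and] at hb
        obtain ⟨hcond, hmem⟩ := hb
        have hl0 : (b : M2) 0 0 + (b : M2) 0 1 * c ≠ 0 := lam_ne_zero x y c b hcond
        simp only [dif_neg hl0]
        set L : K := (b : M2) 0 0 + (b : M2) 0 1 * c with hL
        have hstruct := cond_struct x y hp hq hn hF hK hc b hmem hcond
        have hdetval : ((b : M2)).det = L * L ^ q * muC q x y c := by
          rw [hstruct]
          exact hmat_det_mu x y hcq ((b : M2) 0 0 + (b : M2) 0 1 * c)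
        have harg1 : (x : K) * L = ((x : Kˣ) : K) * L := rfl
        rw [harg1, extK_mul, extK_unit]
        have harg2 : (x : K) * y * ((b : M2)).det / ((x : K) * L)
            = ((y : Kˣ) : K) * (L ^ q * muC q x y c) := by
          rw [hdetval]
          field_simp
        rw [harg2, extK_mul, extK_unit, extK_mul]
        have hLq : extK θ₂ (L ^ q) = ((θ₂ ((Units.mk0 L hl0) ^ q) : ℂˣ) : ℂ) := by
          have h' := extK_unit θ₂ ((Units.mk0 L hl0) ^ q)
          rw [Units.val_pow_eq_pow_val, Units.val_mk0] at h'
          exact h'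
        have hext1 : extK θ₁ L = ((θ₁ (Units.mk0 L hl0) : ℂˣ) : ℂ) := by
          have h' := extK_unit θ₁ (Units.mk0 L hl0)
          rw [Units.val_mk0] at h'
          exact h'
        rw [hLq, hext1]
        ring
    rw [hbij, ← Finset.sum_mul, ← Finset.mul_sum]

end Dev7

section Dev8
variable {F K : Type*} [Field F] [Field K] [Fintype F] [Fintype K] [Algebra F K]

open scoped Classical

/-- choice-based partial inverse of the algebra map -/
noncomputable def toF (F : Type*) {K : Type*} [Field F] [Field K] [Algebra F K] (z : K) : F :=
  if h : z ∈ Set.range (algebraMap F K) then h.choose else 0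

lemma toF_spec {z : K} (h : z ∈ Set.range (algebraMap F K)) :
    algebraMap F K (toF F z) = z := by
  rw [toF, dif_pos h]
  exact h.choose_spec

/-- counting: for any (q+1)-th root of unity ν, the set {z ≠ 0, z^q = ν z} has q-1 elements. -/
lemma card_pow_fiber {q p n : ℕ} (hp : p.Prime) (hq : q = p ^ n) (hn : n ≠ 0)
    (hF : Fintype.card F = q) (hK : Fintype.card K = q ^ 2)
    {ν : K} (hν : ν ^ (q + 1) = 1) :
    (Finset.univ.filter (fun z : K => z ≠ 0 ∧ z ^ q = ν * z)).card = q - 1 := by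
  have h1q : 1 < q := one_lt_q hp hq hn
  set T : Finset K := Finset.univ.filter (fun ν : K => ν ^ (q + 1) = 1) with hT
  set Sf : K → Finset K :=
    fun ν => Finset.univ.filter (fun z : K => z ≠ 0 ∧ z ^ q = ν * z) with hSf
  -- upper bound for T
  have hTcard : T.card ≤ q + 1 := by
    have hmon : (Polynomial.X ^ (q + 1) - Polynomial.C (1 : K)).Monic :=
      Polynomial.monic_X_pow_sub_C 1 (by omega)
    have hsub : T ⊆ (Polynomial.X ^ (q + 1) - Polynomial.C (1 : K)).roots.toFinset := by
      intro z hz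
      simp only [hT, Finset.mem_filter, Finset.mem_univ, true_and] at hz
      rw [Multiset.mem_toFinset, Polynomial.mem_roots hmon.ne_zero]
      simp [Polynomial.IsRoot, sub_eq_zero, hz]
    calc T.card ≤ _ := Finset.card_le_card hsub
      _ ≤ _ := (Polynomial.X ^ (q + 1) - Polynomial.C (1 : K)).roots.toFinset_card_le
      _ ≤ _ := (Polynomial.X ^ (q + 1) - Polynomial.C (1 : K)).card_roots'
      _ = q + 1 := by
        rw [Polynomial.natDegree_X_pow_sub_C]
  -- upper bound for each fiber
  have hScard : ∀ w : K, (Sf w).card ≤ q - 1 := by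
    intro w
    have hmon : (Polynomial.X ^ (q - 1) - Polynomial.C w).Monic :=
      Polynomial.monic_X_pow_sub_C w (by omega)
    have hsub : Sf w ⊆ (Polynomial.X ^ (q - 1) - Polynomial.C w).roots.toFinset := by
      intro z hz
      simp only [hSf, Finset.mem_filter, Finset.mem_univ, true_and] at hz
      obtain ⟨hz0, hzq⟩ := hz
      rw [Multiset.mem_toFinset, Polynomial.mem_roots hmon.ne_zero]
      have hzq' : z ^ (q - 1) = w := by
        apply mul_right_cancel₀ hz0
        rw [← pow_succ]
        have : q - 1 + 1 = q := by omega
        rw [this, hzq, mul_comm]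
      simp [Polynomial.IsRoot, sub_eq_zero, hzq']
    calc (Sf w).card ≤ _ := Finset.card_le_card hsub
      _ ≤ _ := (Polynomial.X ^ (q - 1) - Polynomial.C w).roots.toFinset_card_le
      _ ≤ _ := (Polynomial.X ^ (q - 1) - Polynomial.C w).card_roots'
      _ = q - 1 := by
        rw [Polynomial.natDegree_X_pow_sub_C]
  -- partition of Kˣ
  have hpart : ∑ w ∈ T, (Sf w).card = q ^ 2 - 1 := by
    have hmaps : ∀ z ∈ Finset.univ.filter (fun z : K => z ≠ 0),
        z ^ q * z⁻¹ ∈ T := by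
      intro z hz
      simp only [Finset.mem_filter, Finset.mem_univ, true_and] at hz
      simp only [hT, Finset.mem_filter, Finset.mem_univ, true_and]
      have hzq : (z ^ q * z⁻¹) ^ (q + 1) = z ^ (q * (q + 1)) * (z ^ (q + 1))⁻¹ := by
        rw [mul_pow, ← pow_mul, inv_pow]
      have hz2 : z ^ (q * (q + 1)) = z ^ (q + 1) := by
        rw [show q * (q + 1) = q * q + q by ring, pow_add, pow_mul, pow_qq q hK z, pow_succ]
        ring
      rw [hzq, hz2]
      exact mul_inv_cancel₀ (pow_ne_zero _ hz)
    have hfib := Finset.sum_fiberwise_of_maps_to hmaps (fun _ => (1 : ℕ))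
    simp only [Finset.sum_const, smul_eq_mul, mul_one] at hfib
    have hcard0 : (Finset.univ.filter (fun z : K => z ≠ 0)).card = q ^ 2 - 1 := by
      have : (Finset.univ.filter (fun z : K => z ≠ 0)) = Finset.univ.erase 0 := by
        ext z
        simp [Finset.mem_erase]
      rw [this, Finset.card_erase_of_mem (Finset.mem_univ 0), Finset.card_univ, hK]
    rw [hcard0] at hfib
    rw [← hfib]
    apply Finset.sum_congr rfl
    intro w hw
    congr 1
    ext z
    simp only [hSf, Finset.mem_filter, Finset.mem_univ, true_and]
    constructor
    · rintro ⟨hz0, hzw⟩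
      refine ⟨hz0, ?_⟩
      rw [hzw]
      field_simp
    · rintro ⟨hz0, hzw⟩
      refine ⟨hz0, ?_⟩
      rw [← hzw]
      field_simp
  -- conclude
  have hνT : ν ∈ T := by
    simp only [hT, Finset.mem_filter, Finset.mem_univ, true_and]
    exact hν
  have hupper : (Sf ν).card ≤ q - 1 := hScard ν
  have hlower : q - 1 ≤ (Sf ν).card := by
    by_contra hcon
    push_neg at hcon
    have hsplit : ∑ w ∈ T, (Sf w).card
        = (Sf ν).card + ∑ w ∈ T.erase ν, (Sf w).card :=
      (Finset.add_sum_erase T _ hνT).symm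
    have hrest : ∑ w ∈ T.erase ν, (Sf w).card ≤ (T.card - 1) * (q - 1) := by
      calc ∑ w ∈ T.erase ν, (Sf w).card
          ≤ ∑ _w ∈ T.erase ν, (q - 1) := Finset.sum_le_sum (fun w _ => hScard w)
        _ = (T.erase ν).card * (q - 1) := by rw [Finset.sum_const, smul_eq_mul]
        _ = (T.card - 1) * (q - 1) := by rw [Finset.card_erase_of_mem hνT]
    obtain ⟨m, rfl⟩ : ∃ m, q = m + 1 := ⟨q - 1, by omega⟩
    have hm1 : m + 1 - 1 = m := rfl
    rw [hm1] at hrest hcon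
    have e1 : (T.card - 1) * m ≤ (m + 1) * m :=
      Nat.mul_le_mul_right _ (by omega)
    have e5 : ∑ w ∈ T.erase ν, (Sf w).card ≤ (m + 1) * m := le_trans hrest e1
    have e3 : (m + 1) ^ 2 = m * m + 2 * m + 1 := by ring
    rw [e3] at hpart
    have e4 : (m + 1) * m = m * m + m := by ring
    rw [e4] at e5
    generalize hMM : m * m = M at hpart e5
    omega
  exact le_antisymm hupper hlower

end Dev8

section Dev9
variable {F K : Type*} [Field F] [Field K] [Fintype F] [Fintype K] [Algebra F K]

open scoped Classical

variable (θ₂ : Kˣ →* ℂˣ) (x y : Kˣ)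

lemma muC_fixed (q : ℕ) {p n : ℕ} (hp : p.Prime) (hq : q = p ^ n) (hn : n ≠ 0)
    (hK : Fintype.card K = q ^ 2) (c : K) :
    (muC q x y c) ^ q = muC q x y c := by
  rw [muC, div_pow, frobq_sub hp hq hn hK, frobq_sub hp hq hn hK, mul_pow,
    pow_qq q hK (rK x y), pow_qq q hK c]
  rw [mul_pow]
  rw [show rK x y * c - rK x y ^ q * c ^ q = -(rK x y ^ q * c ^ q - rK x y * c) by ring,
    show c - c ^ q = -(c ^ q - c) by ring, neg_div_neg_eq]

lemma sum_extK_F : ∑ t : F, extK θ₂ (algebraMap F K t)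
    = ∑ t : Fˣ, ((θ₂ (Units.map (algebraMap F K).toMonoidHom t) : ℂˣ) : ℂ) := by
  rw [← Finset.sum_erase_add _ _ (Finset.mem_univ (0 : F))]
  rw [map_zero, extK_zero, add_zero]
  refine Finset.sum_nbij' (fun t => if h : t = (0 : F) then 1 else Units.mk0 t h)
    (fun u => (u : F)) ?_ ?_ ?_ ?_ ?_
  · intro t _; exact Finset.mem_univ _
  · intro u _
    exact Finset.mem_erase.mpr ⟨u.ne_zero, Finset.mem_univ _⟩
  · intro t ht
    have ht0 : t ≠ 0 := Finset.ne_of_mem_erase ht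
    simp [dif_neg ht0]
  · intro u _
    have hu0 : (u : F) ≠ 0 := u.ne_zero
    simp only [dif_neg hu0]
    exact Units.ext rfl
  · intro t ht
    have ht0 : t ≠ 0 := Finset.ne_of_mem_erase ht
    simp only [dif_neg ht0]
    have hcoe : ((Units.map (algebraMap F K).toMonoidHom (Units.mk0 t ht0) : Kˣ) : K)
        = algebraMap F K t := by simp
    rw [← hcoe, extK_unit]

lemma sum_mu {q p n : ℕ} (hp : p.Prime) (hq : q = p ^ n) (hn : n ≠ 0)
    (hF : Fintype.card F = q) (hK : Fintype.card K = q ^ 2)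
    (hxy : ((x⁻¹ * y : Kˣ) : K) ∉ Set.range (algebraMap F K)) :
    ∑ c ∈ Finset.univ.filter (fun c : K => c ∉ Set.range (algebraMap F K)),
        extK θ₂ (muC q x y c)
      = ((q - 1 : ℕ) : ℂ) *
          ∑ t : Fˣ, ((θ₂ (Units.map (algebraMap F K).toMonoidHom t) : ℂˣ) : ℂ) := by
  have hr : rK x y ∉ Set.range (algebraMap F K) := rK_not_mem x y hxy
  have hrq : (rK x y) ^ q ≠ rK x y := by
    intro h
    exact hr ((mem_range_iff_pow_q hp hq hn hF _).mpr h)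
  set r : K := rK x y with hrdef
  have hfix : ∀ t : F, (algebraMap F K t) ^ q = algebraMap F K t :=
    fun t => (mem_range_iff_pow_q hp hq hn hF _).mp ⟨t, rfl⟩
  have hden : ∀ t : F, r ^ q - algebraMap F K t ≠ 0 := by
    intro t h
    apply hrq
    rw [sub_eq_zero] at h
    have : r = algebraMap F K t := by
      rw [← pow_qq q hK r, h, hfix]
    rw [h, this]
  have hnum : ∀ t : F, r - algebraMap F K t ≠ 0 := by
    intro t h
    rw [sub_eq_zero] at h
    exact hr ⟨t, h.symm⟩
  -- fiberwise decomposition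
  rw [← Finset.sum_fiberwise_of_maps_to
    (g := fun c => toF F (muC q x y c)) (t := Finset.univ)
    (fun c _ => Finset.mem_univ _) (fun c => extK θ₂ (muC q x y c))]
  have hinner : ∀ t : F,
      ∑ c ∈ (Finset.univ.filter
          (fun c : K => c ∉ Set.range (algebraMap F K))).filter
          (fun c => toF F (muC q x y c) = t),
        extK θ₂ (muC q x y c)
      = ((q - 1 : ℕ) : ℂ) * extK θ₂ (algebraMap F K t) := by
    intro t
    set ν : K := (r - algebraMap F K t) / (r ^ q - algebraMap F K t) with hν
    have hν1 : ν ≠ 1 := by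
      intro h
      apply hrq
      rw [hν, div_eq_one_iff_eq (hden t)] at h
      have h2 : r = r ^ q := by linear_combination h
      exact h2.symm
    have hνdef : ν * (r ^ q - algebraMap F K t) = r - algebraMap F K t := by
      rw [hν]
      exact div_mul_cancel₀ _ (hden t)
    have hνpow : ν ^ (q + 1) = 1 := by
      have hνq : ν ^ q = (r ^ q - algebraMap F K t) / (r - algebraMap F K t) := by
        rw [hν, div_pow, frobq_sub hp hq hn hK, frobq_sub hp hq hn hK,
          pow_qq q hK r, hfix t]
      rw [pow_succ, hνq, hν, div_mul_div_comm,
        div_eq_one_iff_eq (mul_ne_zero (hnum t) (hden t))]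
      ring
    -- the fiber is the pow-fiber
    have hfib_eq : (Finset.univ.filter
          (fun c : K => c ∉ Set.range (algebraMap F K))).filter
          (fun c => toF F (muC q x y c) = t)
        = Finset.univ.filter (fun z : K => z ≠ 0 ∧ z ^ q = ν * z) := by
      ext c
      simp only [Finset.mem_filter, Finset.mem_univ, true_and]
      constructor
      · rintro ⟨hcR, hct⟩
        have hc0 : c ≠ 0 := by
          intro h
          exact hcR ⟨0, by rw [map_zero, h]⟩
        have hcq : c ^ q ≠ c := by
          intro h
          exact hcR ((mem_range_iff_pow_q hp hq hn hF c).mpr h)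
        have hμR : muC q x y c ∈ Set.range (algebraMap F K) :=
          (mem_range_iff_pow_q hp hq hn hF _).mpr (muC_fixed x y q hp hq hn hK c)
        have hμt : muC q x y c = algebraMap F K t := by
          rw [← toF_spec hμR, hct]
        refine ⟨hc0, ?_⟩
        rw [muC] at hμt
        rw [div_eq_iff (sub_ne_zero.mpr hcq)] at hμt
        have h2 : (r ^ q - algebraMap F K t) * c ^ q = (r - algebraMap F K t) * c := by
          linear_combination hμt
        rw [hν, div_mul_eq_mul_div, eq_div_iff (hden t)]
        linear_combination h2
      · rintro ⟨hc0, hcq⟩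
        have hccq : c ^ q ≠ c := by
          intro h
          apply hν1
          rw [h] at hcq
          have h2 : (ν - 1) * c = 0 := by linear_combination -hcq
          rcases mul_eq_zero.mp h2 with h' | h'
          · rwa [sub_eq_zero] at h'
          · exact absurd h' hc0
        have hcR : c ∉ Set.range (algebraMap F K) := by
          intro h
          exact hccq ((mem_range_iff_pow_q hp hq hn hF c).mp h)
        refine ⟨hcR, ?_⟩
        have hμt : muC q x y c = algebraMap F K t := by
          rw [muC, hcq]
          have hne : ν * c - c ≠ 0 := by
            intro h
            apply hν1
            have : (ν - 1) * c = 0 := by linear_combination h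
            rcases mul_eq_zero.mp this with h' | h'
            · rw [sub_eq_zero] at h'; exact h'
            · exact absurd h' hc0
          rw [div_eq_iff hne]
          linear_combination c * hνdef
        rw [hμt]
        exact (algebraMap F K).injective (toF_spec ⟨t, rfl⟩)
    have hterm : ∀ c ∈ (Finset.univ.filter
          (fun c : K => c ∉ Set.range (algebraMap F K))).filter
          (fun c => toF F (muC q x y c) = t),
        extK θ₂ (muC q x y c) = extK θ₂ (algebraMap F K t) := by
      intro c hc
      simp only [Finset.mem_filter, Finset.mem_univ, true_and] at hc
      obtain ⟨hcR, hct⟩ := hc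
      have hμR : muC q x y c ∈ Set.range (algebraMap F K) :=
        (mem_range_iff_pow_q hp hq hn hF _).mpr (muC_fixed x y q hp hq hn hK c)
      rw [show muC q x y c = algebraMap F K t by rw [← toF_spec hμR, hct]]
    rw [Finset.sum_congr rfl hterm, Finset.sum_const, hfib_eq,
      card_pow_fiber hp hq hn hF hK hνpow, nsmul_eq_mul]
  rw [Finset.sum_congr rfl (fun t _ => hinner t), ← Finset.mul_sum, sum_extK_F]

end Dev9

section Dev10
variable {K : Type*} [Field K] [Fintype K]

local notation "M2" => Matrix (Fin 2) (Fin 2) K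
local notation "GL2" => (Matrix (Fin 2) (Fin 2) K)ˣ

open scoped Classical

lemma sum_C (θ₁ θ₂ : Kˣ →* ℂˣ) (q : ℕ) :
    ∑ u ∈ Finset.univ.filter (fun u : GL2 =>
        ∃ a : Kˣ, (u : M2) = !![(a : K), 0; 0, (a : K) ^ q]),
      extK θ₁ ((u : M2) 0 0) * extK θ₂ ((u : M2) 1 1)
    = ∑ a : Kˣ, ((θ₁ a : ℂˣ) : ℂ) * ((θ₂ (a ^ q) : ℂˣ) : ℂ) := by
  have hdet : ∀ a : Kˣ, (!![(a : K), 0; 0, (a : K) ^ q]).det ≠ 0 := by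
    intro a
    rw [Matrix.det_fin_two_of]
    simpa using mul_ne_zero a.ne_zero (pow_ne_zero q a.ne_zero)
  refine Finset.sum_nbij'
    (fun u => if h : (u : M2) 0 0 = 0 then 1 else Units.mk0 _ h)
    (fun a => glOf !![(a : K), 0; 0, (a : K) ^ q]) ?_ ?_ ?_ ?_ ?_
  · intro u _; exact Finset.mem_univ _
  · intro a _
    simp only [Finset.mem_filter, Finset.mem_univ, true_and]
    exact ⟨a, glOf_coe (hdet a)⟩
  · intro u hu
    simp only [Finset.mem_filter, Finset.mem_univ, true_and] at hu
    obtain ⟨a, ha⟩ := hu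
    have h00 : (u : M2) 0 0 = (a : K) := by rw [ha]; rfl
    have h00ne : (u : M2) 0 0 ≠ 0 := by rw [h00]; exact a.ne_zero
    have hmk : Units.mk0 ((u : M2) 0 0) h00ne = a := Units.ext h00
    simp only [dif_neg h00ne, hmk]
    apply Units.ext
    rw [glOf_coe (hdet a), ha]
  · intro a _
    have h00 : (glOf !![(a : K), 0; 0, (a : K) ^ q] : M2) 0 0 = (a : K) := by
      rw [glOf_coe (hdet a)]; rfl
    have h00ne : (glOf !![(a : K), 0; 0, (a : K) ^ q] : M2) 0 0 ≠ 0 := by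
      rw [h00]; exact a.ne_zero
    simp only [dif_neg h00ne]
    apply Units.ext
    simp [h00]
  · intro u hu
    simp only [Finset.mem_filter, Finset.mem_univ, true_and] at hu
    obtain ⟨a, ha⟩ := hu
    have h00 : (u : M2) 0 0 = (a : K) := by rw [ha]; rfl
    have h11 : (u : M2) 1 1 = ((a ^ q : Kˣ) : K) := by
      rw [ha, Units.val_pow_eq_pow_val]; rfl
    have h00ne : (u : M2) 0 0 ≠ 0 := by rw [h00]; exact a.ne_zero
    have hmk : Units.mk0 ((u : M2) 0 0) h00ne = a := Units.ext h00
    simp only [dif_neg h00ne, hmk]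
    rw [h00, h11, extK_unit, extK_unit]

lemma nat_const_eq (m : ℕ) (hm : 1 ≤ m) :
    (m ^ 2 - m) * (m - 1) = (m - 1) * ((m - 1) * m) := by
  obtain ⟨k, rfl⟩ : ∃ k, m = k + 1 := ⟨m - 1, by omega⟩
  have e1 : (k + 1) ^ 2 = k * k + 2 * k + 1 := by ring
  rw [e1]
  simp only [Nat.add_sub_cancel]
  have e5 : k * k + 2 * k + 1 - (k + 1) = k * k + k := by omega
  rw [e5]
  have e6 : (k * k + k) * k = k * (k * (k + 1)) := by ring
  exact e6

end Dev10

/-- the character sum of the induced character `I[θ]` over the coset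
`diag(x,y)·H`, for `x⁻¹y ∉ 𝔽_q`. -/
theorem stmt_18 (q p n : ℕ) (hp : p.Prime) (hq : q = p ^ n) (hn : n ≠ 0)
    (F K : Type) [Field F] [Field K] [Fintype F] [Fintype K] [Algebra F K]
    (hF : Fintype.card F = q) (hK : Fintype.card K = q ^ 2)
    (θ₁ θ₂ : Kˣ →* ℂˣ) (x y : Kˣ)
    (hxy : ((x⁻¹ * y : Kˣ) : K) ∉ Set.range (algebraMap F K)) :
    ∑ h : ↥(Hsub F K), indB θ₁ θ₂ (diagGL x y * (h : (Matrix (Fin 2) (Fin 2) K)ˣ))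
    = (((θ₁ x : ℂˣ) : ℂ) * ((θ₂ y : ℂˣ) : ℂ) + ((θ₁ y : ℂˣ) : ℂ) * ((θ₂ x : ℂˣ) : ℂ)) *
        (∑ b ∈ Finset.univ.filter (fun b : (Matrix (Fin 2) (Fin 2) K)ˣ =>
            (b : Matrix (Fin 2) (Fin 2) K) 1 0 = 0 ∧ b ∈ Hsub F K),
          extK θ₁ ((b : Matrix (Fin 2) (Fin 2) K) 0 0) *
          extK θ₂ ((b : Matrix (Fin 2) (Fin 2) K) 1 1)) +
      ((q : ℂ) - 1) * (((θ₁ x : ℂˣ) : ℂ) * ((θ₂ y : ℂˣ) : ℂ)) *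
        (∑ u ∈ Finset.univ.filter (fun u : (Matrix (Fin 2) (Fin 2) K)ˣ =>
            ∃ a : Kˣ, (u : Matrix (Fin 2) (Fin 2) K) = !![(a : K), 0; 0, (a : K) ^ q]),
          extK θ₁ ((u : Matrix (Fin 2) (Fin 2) K) 0 0) *
          extK θ₂ ((u : Matrix (Fin 2) (Fin 2) K) 1 1)) *
        (∑ t : Fˣ, ((θ₂ (Units.map (algebraMap F K).toMonoidHom t) : ℂˣ) : ℂ)) := by
  classical
  have h1K : 1 ≤ Fintype.card K := Fintype.card_pos
  have h2K : 2 ≤ Fintype.card K := Fintype.one_lt_card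
  have h1q : 1 ≤ q := le_of_lt (one_lt_q hp hq hn)
  -- Step A: reduce the LHS to a sum over lines
  have hLHS : (∑ h : ↥(Hsub F K),
        indB θ₁ θ₂ (diagGL x y * (h : (Matrix (Fin 2) (Fin 2) K)ˣ)))
      = ∑ ℓ : Option K, ∑ h : ↥(Hsub F K),
          Wt θ₁ θ₂ (diagGL x y * (h : (Matrix (Fin 2) (Fin 2) K)ˣ)) (rep ℓ) := by
    have hstep : ∀ h : ↥(Hsub F K),
        indB θ₁ θ₂ (diagGL x y * (h : (Matrix (Fin 2) (Fin 2) K)ˣ))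
        = ((((Fintype.card K - 1) * ((Fintype.card K - 1) * Fintype.card K) : ℕ) : ℂ))⁻¹ *
          (((Fintype.card K ^ 2 - Fintype.card K) * (Fintype.card K - 1) : ℕ) •
            ∑ ℓ : Option K,
              Wt θ₁ θ₂ (diagGL x y * (h : (Matrix (Fin 2) (Fin 2) K)ˣ)) (rep ℓ)) := by
      intro h
      rw [indB, card_borel, sum_indB]
    rw [Finset.sum_congr rfl (fun h _ => hstep h), ← Finset.mul_sum, ← Finset.smul_sum,
      nsmul_eq_mul]
    have hM : (((Fintype.card K ^ 2 - Fintype.card K) * (Fintype.card K - 1) : ℕ) : ℂ)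
        = (((Fintype.card K - 1) * ((Fintype.card K - 1) * Fintype.card K) : ℕ) : ℂ) :=
      Nat.cast_inj.mpr (nat_const_eq (Fintype.card K) h1K)
    have hNne : ((((Fintype.card K - 1) * ((Fintype.card K - 1) * Fintype.card K) : ℕ)) : ℂ)
        ≠ 0 := by
      rw [Nat.cast_ne_zero]
      exact Nat.mul_ne_zero (by omega) (Nat.mul_ne_zero (by omega) (by omega))
    rw [hM, ← mul_assoc, inv_mul_cancel₀ hNne, one_mul]
    exact Finset.sum_comm
  rw [hLHS, Fintype.sum_option, rep_none, sum_line_e2 θ₁ θ₂ x y]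
  -- Step B: the sum over K-lines
  have hcsum : ∑ c : K, ∑ h : ↥(Hsub F K),
        Wt θ₁ θ₂ (diagGL x y * (h : (Matrix (Fin 2) (Fin 2) K)ˣ)) (rep (some c))
      = ((θ₁ x : ℂˣ) : ℂ) * ((θ₂ y : ℂˣ) : ℂ) *
          (∑ b ∈ Finset.univ.filter (fun b : (Matrix (Fin 2) (Fin 2) K)ˣ =>
              (b : Matrix (Fin 2) (Fin 2) K) 1 0 = 0 ∧ b ∈ Hsub F K),
            extK θ₁ ((b : Matrix (Fin 2) (Fin 2) K) 0 0) *
            extK θ₂ ((b : Matrix (Fin 2) (Fin 2) K) 1 1))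
        + ((θ₁ x : ℂˣ) : ℂ) * ((θ₂ y : ℂˣ) : ℂ) *
            (∑ a : Kˣ, ((θ₁ a : ℂˣ) : ℂ) * ((θ₂ (a ^ q) : ℂˣ) : ℂ)) *
            (((q - 1 : ℕ) : ℂ) *
              ∑ t : Fˣ, ((θ₂ (Units.map (algebraMap F K).toMonoidHom t) : ℂˣ) : ℂ)) := by
    simp only [rep_some]
    rw [← Finset.sum_filter_add_sum_filter_not Finset.univ
      (fun c : K => c ∈ Set.range (algebraMap F K))]
    have hpart1 : ∑ c ∈ Finset.univ.filter
          (fun c : K => c ∈ Set.range (algebraMap F K)),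
        ∑ h : ↥(Hsub F K),
          Wt θ₁ θ₂ (diagGL x y * (h : (Matrix (Fin 2) (Fin 2) K)ˣ)) ![1, c]
        = ((θ₁ x : ℂˣ) : ℂ) * ((θ₂ y : ℂˣ) : ℂ) *
          (∑ b ∈ Finset.univ.filter (fun b : (Matrix (Fin 2) (Fin 2) K)ˣ =>
              (b : Matrix (Fin 2) (Fin 2) K) 1 0 = 0 ∧ b ∈ Hsub F K),
            extK θ₁ ((b : Matrix (Fin 2) (Fin 2) K) 0 0) *
            extK θ₂ ((b : Matrix (Fin 2) (Fin 2) K) 1 1)) := by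
      rw [Finset.sum_eq_single_of_mem (0 : K)
        (by simp only [Finset.mem_filter, Finset.mem_univ, true_and];
            exact ⟨0, map_zero _⟩)
        (fun c hc hne => by
          simp only [Finset.mem_filter, Finset.mem_univ, true_and] at hc
          exact sum_line_rat θ₁ θ₂ x y c hc hne hxy)]
      exact sum_line_e1 θ₁ θ₂ x y
    have hpart2 : ∑ c ∈ Finset.univ.filter
          (fun c : K => ¬ c ∈ Set.range (algebraMap F K)),
        ∑ h : ↥(Hsub F K),
          Wt θ₁ θ₂ (diagGL x y * (h : (Matrix (Fin 2) (Fin 2) K)ˣ)) ![1, c]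
        = ((θ₁ x : ℂˣ) : ℂ) * ((θ₂ y : ℂˣ) : ℂ) *
            (∑ a : Kˣ, ((θ₁ a : ℂˣ) : ℂ) * ((θ₂ (a ^ q) : ℂˣ) : ℂ)) *
            (((q - 1 : ℕ) : ℂ) *
              ∑ t : Fˣ, ((θ₂ (Units.map (algebraMap F K).toMonoidHom t) : ℂˣ) : ℂ)) := by
      rw [Finset.sum_congr rfl (fun c hc => by
        simp only [Finset.mem_filter, Finset.mem_univ, true_and] at hc
        exact sum_line_irr θ₁ θ₂ x y hp hq hn hF hK hxy hc)]
      rw [← Finset.mul_sum, sum_mu θ₂ x y hp hq hn hF hK hxy]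
    rw [hpart1, hpart2]
  rw [hcsum, ← sum_C θ₁ θ₂ q, Nat.cast_sub h1q, Nat.cast_one]
  ring
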